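/- arXiv:2006.10821 — 2 statements merged into one kernel-verified Lean document; each statement's English description precedes it below -/
import Mathlib

section
/- For each 1 ≤ p < ∞ and each van Hove sequence 𝒜, the space Bap^p_𝒜(G) is closed in BL^p_𝒜(G) with respect to the seminorm ‖·‖_{b,p,𝒜}: if f_n ∈ Bap^p_𝒜(G), f ∈ BL^p_𝒜(G) and ‖f_n − f‖_{b,p,𝒜} → 0, then f ∈ Bap^p_𝒜(G). Consequently, the quotient of Bap^p_𝒜(G) by the subspace of elements of seminorm zero, equipped with the induced norm, is a Banach space. -/
open MeasureTheory Filter Topology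
open scoped ENNReal Pointwise

noncomputable section

namespace MAP

section Defs

variable {G : Type*} [MeasurableSpace G] [TopologicalSpace G] [AddCommGroup G]

/-- The `K`-boundary `∂^K A` of a set `A`. -/
def kBoundary (K A : Set G) : Set G :=
  (closure (A + K) \ A) ∪ ((Aᶜ - K) ∩ closure A)

/-- A van Hove sequence: nonempty relatively compact open sets whose `K`-boundaries
become negligible compared to their volume. -/
structure IsVanHove (θ : Measure G) (A : ℕ → Set G) : Prop where
  isOpen : ∀ n, IsOpen (A n)
  nonempty : ∀ n, (A n).Nonempty
  relCompact : ∀ n, IsCompact (closure (A n))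
  boundary : ∀ K : Set G, IsCompact K →
    Tendsto (fun n => θ (kBoundary K (A n)) / θ (A n)) atTop (𝓝 0)

/-- `(1/θ(A)) ∫_A |f|^p`, valued in `ℝ≥0∞`. -/
def lpAvg (θ : Measure G) (A : Set G) (p : ℝ) (f : G → ℂ) : ℝ≥0∞ :=
  (∫⁻ t in A, ENNReal.ofReal (‖f t‖ ^ p) ∂θ) / θ A

/-- The Besicovitch seminorm `‖f‖_{b,p,𝒜}`. -/
def besSN (θ : Measure G) (A : ℕ → Set G) (p : ℝ) (f : G → ℂ) : ℝ≥0∞ :=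
  (limsup (fun n => lpAvg θ (A n) p f) atTop) ^ (1 / p)

/-- The Weyl seminorm `‖f‖_{w,p,𝒜}`. -/
def weylSN (θ : Measure G) (A : ℕ → Set G) (p : ℝ) (f : G → ℂ) : ℝ≥0∞ :=
  (limsup (fun n => ⨆ x : G, lpAvg θ (x +ᵥ A n) p f) atTop) ^ (1 / p)

/-- Membership in `L^p_loc`. -/
def MemLpLoc (θ : Measure G) (p : ℝ) (f : G → ℂ) : Prop :=
  AEStronglyMeasurable f θ ∧
    ∀ K : Set G, IsCompact K → (∫⁻ t in K, ENNReal.ofReal (‖f t‖ ^ p) ∂θ) < ⊤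

/-- A relatively dense subset of `G`. -/
def RelDense (S : Set G) : Prop :=
  ∃ K : Set G, IsCompact K ∧ ∀ g : G, ∃ t ∈ S, g - t ∈ K

/-- Mean almost periodicity of a function with respect to a van Hove sequence. -/
def MeanAP (θ : Measure G) (A : ℕ → Set G) (f : G → ℂ) : Prop :=
  ∀ ε : ℝ, 0 < ε →
    RelDense {t : G | besSN θ A 1 (fun s => f s - f (s - t)) < ENNReal.ofReal ε}

/-- `C_c(G)`: continuous compactly supported functions. -/
def IsCc (φ : G → ℂ) : Prop := Continuous φ ∧ HasCompactSupport φ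

/-- `(1/θ(A)) ∫_A f`, valued in `ℂ`. -/
def cAvg (θ : Measure G) (A : Set G) (f : G → ℂ) : ℂ :=
  (∫ t in A, f t ∂θ) / ((θ A).toReal : ℂ)

/-- `(1/θ(A)) ∫_{s+A} f`, valued in `ℂ`. -/
def shiftAvg (θ : Measure G) (A : Set G) (s : G) (f : G → ℂ) : ℂ :=
  (∫ t in s +ᵥ A, f t ∂θ) / ((θ A).toReal : ℂ)

/-- `(1/θ(A)) ∫_{s+A} f` for a real-valued `f`. -/
def shiftAvgR (θ : Measure G) (A : Set G) (s : G) (f : G → ℝ) : ℝ :=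
  (∫ t in s +ᵥ A, f t ∂θ) / (θ A).toReal

/-- The mean `M_𝒜(f)` exists and equals `c`. -/
def MeanTendsto (θ : Measure G) (A : ℕ → Set G) (f : G → ℂ) (c : ℂ) : Prop :=
  Tendsto (fun n => cAvg θ (A n) f) atTop (𝓝 c)

/-- The Dirac comb of a point set. -/
def diracComb (Λ : Set G) : Measure G := Measure.sum fun x : Λ => Measure.dirac (x : G)

/-- Convolution `(μ * φ)(t) = ∫ φ(t - s) dμ(s)` of a positive measure with a function. -/
def convM (μ : Measure G) (φ : G → ℂ) : G → ℂ := fun t => ∫ s, φ (t - s) ∂μ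

/-- Uniform discreteness of a point set. -/
def UnifDiscrete (Λ : Set G) : Prop :=
  ∃ U : Set G, IsOpen U ∧ (0 : G) ∈ U ∧
    ∀ x ∈ Λ, ∀ y ∈ Λ, x ≠ y → (x +ᵥ U) ∩ (y +ᵥ U) = ∅

/-- Delone sets: uniformly discrete and relatively dense. -/
def IsDelone (Λ : Set G) : Prop := UnifDiscrete Λ ∧ RelDense Λ

end Defs

section CharDefs

variable (G : Type*) [TopologicalSpace G] [AddCommGroup G]

/-- The set of continuous characters of `G`, inside `C(G, ℂ)`. -/
def CharSet : Set C(G, ℂ) :=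
  {χ | (∀ x, ‖χ x‖ = 1) ∧ ∀ x y, χ (x + y) = χ x * χ y}

/-- The dual group `Ĝ` of continuous characters, with the compact-open topology. -/
abbrev Char : Type _ := ↥(CharSet G)

instance : MeasurableSpace (Char G) := borel _

instance : BorelSpace (Char G) := ⟨rfl⟩

end CharDefs

section CharUse

variable {G : Type*} [MeasurableSpace G] [TopologicalSpace G] [AddCommGroup G]

/-- Trigonometric polynomials: finite linear combinations of characters. -/
def IsTrigPoly (P : G → ℂ) : Prop :=
  ∃ (n : ℕ) (c : Fin n → ℂ) (χ : Fin n → Char G),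
    P = fun x => ∑ i, c i * ((χ i : C(G, ℂ)) x)

/-- Besicovitch `p`-almost periodicity of a function. -/
def BapMem (θ : Measure G) (A : ℕ → Set G) (p : ℝ) (f : G → ℂ) : Prop :=
  MemLpLoc θ p f ∧ ∀ ε : ℝ, 0 < ε →
    ∃ P : G → ℂ, IsTrigPoly P ∧ besSN θ A p (fun x => f x - P x) < ENNReal.ofReal ε

/-- Weyl `p`-almost periodicity of a function. -/
def WapMem (θ : Measure G) (A : ℕ → Set G) (p : ℝ) (f : G → ℂ) : Prop :=
  MemLpLoc θ p f ∧ ∀ ε : ℝ, 0 < ε →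
    ∃ P : G → ℂ, IsTrigPoly P ∧ weylSN θ A p (fun x => f x - P x) < ENNReal.ofReal ε

/-- The Fourier–Bohr coefficient of `f` at `χ` along `A` exists and equals `a`. -/
def FBTendsto (θ : Measure G) (A : ℕ → Set G) (f : G → ℂ) (χ : Char G) (a : ℂ) : Prop :=
  MeanTendsto θ A (fun t => (starRingEnd ℂ) ((χ : C(G, ℂ)) t) * f t) a

/-- `φ̌(χ) = ∫ χ(t) φ(t) dt`. -/
def checkFn (θ : Measure G) (φ : G → ℂ) (χ : Char G) : ℂ :=
  ∫ t, (χ : C(G, ℂ)) t * φ t ∂θ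

/-- `(φ * ψ̃)(x) = ∫ φ(x - y) conj(ψ(-y)) dy`. -/
def tildeConv (θ : Measure G) (φ ψ : G → ℂ) : G → ℂ :=
  fun x => ∫ y, φ (x - y) * (starRingEnd ℂ) (ψ (-y)) ∂θ

/-- A pure point measure. -/
def PurePointM {X : Type*} [MeasurableSpace X] (σ : Measure X) : Prop :=
  ∀ B : Set X, MeasurableSet B → σ B = ∑' x : B, σ {(x : X)}

end CharUse

section TB

variable (Γ : Type*) [MeasurableSpace Γ] [TopologicalSpace Γ] [AddCommGroup Γ]

/-- A translation bounded complex (Radon) measure, given by its total variation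
measure together with a unimodular density (polar decomposition). -/
structure TBMeasure where
  tv : Measure Γ
  dens : Γ → ℂ
  dens_meas : Measurable dens
  dens_norm : ∀ x, ‖dens x‖ = 1
  bounded : ∀ K : Set Γ, IsCompact K → ∃ C : ℝ≥0∞, C ≠ ⊤ ∧ ∀ t : Γ, tv (t +ᵥ K) ≤ C

end TB

section TBUse

variable {G : Type*} [MeasurableSpace G] [TopologicalSpace G] [AddCommGroup G]

/-- `∫ f dμ` for a translation bounded complex measure. -/
def TBMeasure.integral (μ : TBMeasure G) (f : G → ℂ) : ℂ := ∫ x, f x * μ.dens x ∂μ.tv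

/-- `(μ * φ)(t) = ∫ φ(t - s) dμ(s)`. -/
def TBMeasure.conv (μ : TBMeasure G) (φ : G → ℂ) : G → ℂ :=
  fun t => ∫ s, φ (t - s) * μ.dens s ∂μ.tv

/-- `(1/θ(A_n)) · (μ|_{A_n} * ν̃|_{-A_n})(φ)`, the `n`-th Eberlein pairing of `μ` with `ν̃`. -/
def ebPair (θ : Measure G) (A : ℕ → Set G) (μ ν : TBMeasure G) (φ : G → ℂ) (n : ℕ) : ℂ :=
  (∫ s in A n, ∫ u in A n, φ (s - u) * μ.dens s * (starRingEnd ℂ) (ν.dens u) ∂ν.tv ∂μ.tv) /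
    ((θ (A n)).toReal : ℂ)

/-- Fourier–Bohr coefficient of a translation bounded measure along `A`. -/
def FBTendstoM (θ : Measure G) (A : ℕ → Set G) (μ : TBMeasure G) (χ : Char G) (a : ℂ) : Prop :=
  Tendsto (fun n =>
      (∫ t in A n, (starRingEnd ℂ) ((χ : C(G, ℂ)) t) * μ.dens t ∂μ.tv) /
        ((θ (A n)).toReal : ℂ))
    atTop (𝓝 a)

/-- `σ` is the Fourier transform of the positive definite measure `γ`:
`∫_{Ĝ} |φ̌|² dσ = ∫_G (φ * φ̃) dγ` for all `φ ∈ C_c(G)`. -/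
def IsFTOf (θ : Measure G) (γ : TBMeasure G) (σ : Measure (Char G)) : Prop :=
  ∀ φ : G → ℂ, IsCc φ → ∃ r : ℝ, 0 ≤ r ∧
    γ.integral (tildeConv θ φ φ) = (r : ℂ) ∧
    (∫⁻ χ, ENNReal.ofReal (‖checkFn θ φ χ‖ ^ 2) ∂σ) = ENNReal.ofReal r

end TBUse

section UniformDefs

variable {H : Type*} [UniformSpace H]

/-- `C_u(G)`: bounded uniformly continuous functions. -/
def CuFun (f : H → ℂ) : Prop := UniformContinuous f ∧ ∃ C : ℝ, ∀ x, ‖f x‖ ≤ C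

/-- Bohr (strong) almost periodicity. -/
def BohrAP [AddCommGroup H] (f : H → ℂ) : Prop :=
  CuFun f ∧ ∀ ε : ℝ, 0 < ε → RelDense {t : H | ∀ x, ‖f x - f (x - t)‖ ≤ ε}

end UniformDefs

end MAP

open MAP

section AuxStatementNine

open Set

/-- Subadditivity of `limsup` in `ℝ≥0∞`. -/
lemma aux_limsup_add_le (u v : ℕ → ℝ≥0∞) :
    limsup (fun n => u n + v n) atTop ≤ limsup u atTop + limsup v atTop := by
  rcases eq_top_or_lt_top (limsup u atTop) with ha | ha
  · rw [ha, top_add]; exact le_top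
  rcases eq_top_or_lt_top (limsup v atTop) with hb | hb
  · rw [hb, add_top]; exact le_top
  refine ENNReal.le_of_forall_pos_le_add fun ε hε _ => ?_
  have hε2 : ((ε : ℝ≥0∞) / 2) ≠ 0 := by
    simp [ENNReal.div_eq_zero_iff, hε.ne']
  have h1 : ∀ᶠ n in atTop, u n < limsup u atTop + ε / 2 :=
    Filter.eventually_lt_of_limsup_lt (ENNReal.lt_add_right ha.ne hε2)
  have h2 : ∀ᶠ n in atTop, v n < limsup v atTop + ε / 2 :=
    Filter.eventually_lt_of_limsup_lt (ENNReal.lt_add_right hb.ne hε2)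
  refine Filter.limsup_le_of_le (by isBoundedDefault) ?_
  filter_upwards [h1, h2] with n hn1 hn2
  calc u n + v n ≤ (limsup u atTop + ε / 2) + (limsup v atTop + ε / 2) :=
        add_le_add hn1.le hn2.le
    _ = limsup u atTop + limsup v atTop + ε := by
        rw [add_add_add_comm, ENNReal.add_halves]

variable {G : Type*} [MeasurableSpace G]

/-- Bridging the integrand. -/
lemma aux_J_bridge (θ : Measure G) (S : Set G) {p : ℝ} (hp : 0 ≤ p) (u : G → ℂ) :
    (∫⁻ t in S, ENNReal.ofReal (‖u t‖ ^ p) ∂θ)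
      = ∫⁻ t in S, ENNReal.ofReal ‖u t‖ ^ p ∂θ :=
  lintegral_congr fun t => (ENNReal.ofReal_rpow_of_nonneg (norm_nonneg _) hp).symm

lemma aux_lpAvg_eq (θ : Measure G) (S : Set G) {p : ℝ} (hp : 0 ≤ p) (u : G → ℂ) :
    lpAvg θ S p u = (∫⁻ t in S, ENNReal.ofReal ‖u t‖ ^ p ∂θ) / θ S := by
  simp only [MAP.lpAvg, aux_J_bridge θ S hp u]

lemma aux_besSN_eq (θ : Measure G) (A : ℕ → Set G) {p : ℝ} (hp : 0 < p) (u : G → ℂ) :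
    besSN θ A p u = limsup (fun n => lpAvg θ (A n) p u ^ (1 / p)) atTop := by
  have h := OrderIso.limsup_apply (γ := ℝ≥0∞)
      (ENNReal.orderIsoRpow (1 / p) (by positivity))
      (u := fun n => lpAvg θ (A n) p u) (f := atTop)
  simp only [ENNReal.orderIsoRpow_apply] at h
  simpa [MAP.besSN] using h

lemma aux_besSN_congr (θ : Measure G) (A : ℕ → Set G) (p : ℝ) {u v : G → ℂ}
    (h : ∀ x, ‖u x‖ = ‖v x‖) : besSN θ A p u = besSN θ A p v := by
  have : (fun n => lpAvg θ (A n) p u) = fun n => lpAvg θ (A n) p v := by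
    funext n
    simp only [MAP.lpAvg]
    congr 1
    exact lintegral_congr fun t => by rw [h t]
  simp only [MAP.besSN, this]

lemma aux_besSN_sub_rev (θ : Measure G) (A : ℕ → Set G) (p : ℝ) (u v : G → ℂ) :
    besSN θ A p (fun x => u x - v x) = besSN θ A p (fun x => v x - u x) :=
  aux_besSN_congr θ A p fun x => norm_sub_rev _ _

/-- Triangle inequality for the Besicovitch seminorm. -/
lemma aux_besSN_add_le (θ : Measure G) (A : ℕ → Set G) {p : ℝ} (hp : 1 ≤ p) {u v : G → ℂ}
    (hu : AEStronglyMeasurable u θ) (hv : AEStronglyMeasurable v θ) :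
    besSN θ A p (fun x => u x + v x) ≤ besSN θ A p u + besSN θ A p v := by
  have hp0 : (0 : ℝ) < p := lt_of_lt_of_le one_pos hp
  rw [aux_besSN_eq θ A hp0, aux_besSN_eq θ A hp0, aux_besSN_eq θ A hp0]
  have key : ∀ n, (lpAvg θ (A n) p fun x => u x + v x) ^ (1 / p)
      ≤ lpAvg θ (A n) p u ^ (1 / p) + lpAvg θ (A n) p v ^ (1 / p) := by
    intro n
    rw [aux_lpAvg_eq θ _ hp0.le, aux_lpAvg_eq θ _ hp0.le, aux_lpAvg_eq θ _ hp0.le,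
      ENNReal.div_rpow_of_nonneg _ _ (by positivity),
      ENNReal.div_rpow_of_nonneg _ _ (by positivity),
      ENNReal.div_rpow_of_nonneg _ _ (by positivity), ← ENNReal.add_div]
    refine ENNReal.div_le_div_right ?_ _
    have hmu : AEMeasurable (fun t => ENNReal.ofReal ‖u t‖) (θ.restrict (A n)) :=
      ENNReal.measurable_ofReal.comp_aemeasurable (hu.restrict.norm.aemeasurable)
    have hmv : AEMeasurable (fun t => ENNReal.ofReal ‖v t‖) (θ.restrict (A n)) :=
      ENNReal.measurable_ofReal.comp_aemeasurable (hv.restrict.norm.aemeasurable)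
    calc (∫⁻ t in A n, ENNReal.ofReal ‖u t + v t‖ ^ p ∂θ) ^ (1 / p)
        ≤ (∫⁻ t in A n, (ENNReal.ofReal ‖u t‖ + ENNReal.ofReal ‖v t‖) ^ p ∂θ) ^ (1 / p) := by
          refine ENNReal.rpow_le_rpow (lintegral_mono fun t => ?_) (by positivity)
          refine ENNReal.rpow_le_rpow ?_ hp0.le
          exact le_trans (ENNReal.ofReal_le_ofReal (norm_add_le _ _)) ENNReal.ofReal_add_le
      _ ≤ _ := by simpa using ENNReal.lintegral_Lp_add_le hmu hmv hp
  exact le_trans (limsup_le_limsup (Filter.Eventually.of_forall key)) (aux_limsup_add_le _ _)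

/-- Minkowski inequality for finite sums. -/
lemma aux_Lp_sum_le {α : Type*} [MeasurableSpace α] (μ : MeasureTheory.Measure α) {p : ℝ}
    (hp : 1 ≤ p) (s : Finset ℕ) (w : ℕ → α → ℝ≥0∞) (hw : ∀ i, AEMeasurable (w i) μ) :
    (∫⁻ x, (∑ i ∈ s, w i x) ^ p ∂μ) ^ (1 / p)
      ≤ ∑ i ∈ s, (∫⁻ x, w i x ^ p ∂μ) ^ (1 / p) := by
  classical
  have hp0 : (0 : ℝ) < p := lt_of_lt_of_le one_pos hp
  induction s using Finset.induction_on with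
  | empty =>
      simp only [Finset.sum_empty]
      rw [lintegral_congr (fun x => ENNReal.zero_rpow_of_pos hp0), lintegral_zero,
        ENNReal.zero_rpow_of_pos (one_div_pos.mpr hp0)]
  | @insert a s ha ih =>
      simp only [Finset.sum_insert ha]
      have hsum : AEMeasurable (fun x => ∑ i ∈ s, w i x) μ :=
        Finset.aemeasurable_fun_sum s fun i _ => hw i
      refine le_trans ?_ (add_le_add_right ih _)
      simpa using ENNReal.lintegral_Lp_add_le (hw a) hsum hp

/-- `(a+b)^p ≤ 2^p (a^p + b^p)` in `ℝ≥0∞`. -/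
lemma aux_rpow_add_le {p : ℝ} (hp : 0 ≤ p) (a b : ℝ≥0∞) :
    (a + b) ^ p ≤ (2 : ℝ≥0∞) ^ p * (a ^ p + b ^ p) := by
  calc (a + b) ^ p ≤ (2 * max a b) ^ p := by
        refine ENNReal.rpow_le_rpow ?_ hp
        rw [two_mul]
        exact add_le_add (le_max_left _ _) (le_max_right _ _)
    _ = (2 : ℝ≥0∞) ^ p * (max a b) ^ p := ENNReal.mul_rpow_of_nonneg _ _ hp
    _ ≤ _ := by
        refine mul_le_mul_right ?_ _
        rcases max_cases a b with ⟨h, _⟩ | ⟨h, _⟩ <;> rw [h]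
        · exact le_add_right le_rfl
        · exact le_add_left le_rfl

lemma aux_rpow_ne_zero {x : ℝ≥0∞} {y : ℝ} (hx : x ≠ 0) (hxt : x ≠ ⊤) : x ^ y ≠ 0 := by
  intro h
  rcases ENNReal.rpow_eq_zero_iff.mp h with ⟨h1, _⟩ | ⟨h1, _⟩
  · exact hx h1
  · exact hxt h1

lemma aux_collapse {x : ℝ≥0∞} {p : ℝ} (hp : p ≠ 0) : (x ^ p) ^ (1 / p) = x := by
  rw [← ENNReal.rpow_mul, mul_one_div_cancel hp, ENNReal.rpow_one]

lemma aux_collapse' {x : ℝ≥0∞} {p : ℝ} (hp : p ≠ 0) : (x ^ (1 / p)) ^ p = x := by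
  rw [← ENNReal.rpow_mul, one_div_mul_cancel hp, ENNReal.rpow_one]

end AuxStatementNine

theorem statement9
    {G : Type*} [AddCommGroup G] [TopologicalSpace G] [IsTopologicalAddGroup G]
    [LocallyCompactSpace G] [SigmaCompactSpace G] [T2Space G]
    [MeasurableSpace G] [BorelSpace G]
    (θ : Measure G) [θ.IsAddHaarMeasure]
    (p : ℝ) (hp : 1 ≤ p) (A : ℕ → Set G) (hA : IsVanHove θ A) :
    (∀ (f : ℕ → G → ℂ) (g : G → ℂ), (∀ n, BapMem θ A p (f n)) →
      (MemLpLoc θ p g ∧ besSN θ A p g < ⊤) →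
      Tendsto (fun n => besSN θ A p (fun x => f n x - g x)) atTop (𝓝 0) →
      BapMem θ A p g) ∧
    (∀ f : ℕ → G → ℂ, (∀ n, BapMem θ A p (f n)) →
      (∀ ε : ℝ, 0 < ε → ∃ N : ℕ, ∀ m ≥ N, ∀ n ≥ N,
        besSN θ A p (fun x => f m x - f n x) < ENNReal.ofReal ε) →
      ∃ g : G → ℂ, BapMem θ A p g ∧
        Tendsto (fun n => besSN θ A p (fun x => f n x - g x)) atTop (𝓝 0)) := by
  classical
  have hp0 : (0:ℝ) < p := lt_of_lt_of_le one_pos hp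
  have hθpos : ∀ ν, θ (A ν) ≠ 0 := fun ν => (hA.isOpen ν).measure_ne_zero θ (hA.nonempty ν)
  have hθfin : ∀ ν, θ (A ν) ≠ ⊤ := fun ν =>
    (lt_of_le_of_lt (measure_mono subset_closure) (hA.relCompact ν).measure_lt_top).ne
  have htrig : ∀ P : G → ℂ, IsTrigPoly P → Continuous P := by
    rintro P ⟨n, c, χ, rfl⟩
    exact continuous_finset_sum _ fun i _ => continuous_const.mul (χ i).1.continuous
  constructor
  · -- Part 1 : closedness
    rintro f g hf ⟨hgloc, -⟩ hconv
    refine ⟨hgloc, fun ε hε => ?_⟩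
    have hev : ∀ᶠ n in atTop, besSN θ A p (fun x => f n x - g x) ≤ ENNReal.ofReal (ε/3) :=
      ENNReal.tendsto_nhds_zero.mp hconv _ (by simp [ENNReal.ofReal_pos]; linarith)
    obtain ⟨n, hn⟩ := hev.exists
    obtain ⟨P, hP, hPn⟩ := (hf n).2 (ε/3) (by linarith)
    refine ⟨P, hP, ?_⟩
    have hPm : AEStronglyMeasurable P θ := (htrig P hP).aestronglyMeasurable
    have hfn : AEStronglyMeasurable (f n) θ := (hf n).1.1
    have tri : besSN θ A p (fun x => g x - P x)
        ≤ besSN θ A p (fun x => g x - f n x) + besSN θ A p (fun x => f n x - P x) := by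
      have hfe : (fun x => g x - P x) = fun x => (g x - f n x) + (f n x - P x) := by
        funext x; ring
      rw [hfe]
      exact aux_besSN_add_le θ A hp (hgloc.1.sub hfn) (hfn.sub hPm)
    have h1 : besSN θ A p (fun x => g x - f n x) ≤ ENNReal.ofReal (ε/3) := by
      rw [aux_besSN_sub_rev]; exact hn
    refine lt_of_le_of_lt tri ?_
    calc besSN θ A p (fun x => g x - f n x) + besSN θ A p (fun x => f n x - P x)
        < ENNReal.ofReal (ε/3) + ENNReal.ofReal (ε/3) :=
          ENNReal.add_lt_add_of_le_of_lt (ne_top_of_le_ne_top ENNReal.ofReal_ne_top h1) h1 hPn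
      _ = ENNReal.ofReal (ε/3 + ε/3) := (ENNReal.ofReal_add (by linarith) (by linarith)).symm
      _ < ENNReal.ofReal ε := (ENNReal.ofReal_lt_ofReal_iff hε).mpr (by linarith)
  · -- Part 2 : completeness
    intro f hf hC
    have hmeasF : ∀ j : ℕ, AEStronglyMeasurable (f j) θ := fun j => (hf j).1.1
    choose N hN using fun i : ℕ => hC ((1/2 : ℝ) ^ i) (by positivity)
    set φ : ℕ → ℕ := fun k => (Finset.range (k+1)).sup N + k with hφdef
    have hφN : ∀ k, N k ≤ φ k := fun k => by
      have : N k ≤ (Finset.range (k+1)).sup N := Finset.le_sup (Finset.self_mem_range_succ k)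
      simp only [hφdef]; omega
    have hφmono : Monotone φ := by
      intro a b hab
      have : (Finset.range (a+1)).sup N ≤ (Finset.range (b+1)).sup N :=
        Finset.sup_mono (Finset.range_subset_range.mpr (by omega))
      simp only [hφdef]; omega
    have hφge : ∀ k, k ≤ φ k := fun k => by simp only [hφdef]; omega
    have hFh : ∀ i, besSN θ A p (fun x => f (φ (i+1)) x - f (φ i) x)
        < ENNReal.ofReal ((1/2 : ℝ) ^ i) := fun i =>
      hN i _ (le_trans (hφN i) (hφmono (Nat.le_succ i))) _ (hφN i)
    have hlp : ∀ i, ∀ᶠ ν in atTop,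
        lpAvg θ (A ν) p (fun x => f (φ (i+1)) x - f (φ i) x)
          ≤ ENNReal.ofReal ((1/2:ℝ)^i) ^ p := by
      intro i
      have h2 := hFh i
      simp only [MAP.besSN] at h2
      have h1 : limsup (fun ν => lpAvg θ (A ν) p (fun x => f (φ (i+1)) x - f (φ i) x)) atTop
          < ENNReal.ofReal ((1/2:ℝ)^i) ^ p := by
        calc limsup (fun ν => lpAvg θ (A ν) p (fun x => f (φ (i+1)) x - f (φ i) x)) atTop
            = ((limsup (fun ν => lpAvg θ (A ν) p
                (fun x => f (φ (i+1)) x - f (φ i) x)) atTop) ^ (1/p)) ^ p :=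
              (aux_collapse' hp0.ne').symm
          _ < ENNReal.ofReal ((1/2:ℝ)^i) ^ p := ENNReal.rpow_lt_rpow h2 hp0
      exact (Filter.eventually_lt_of_limsup_lt h1).mono fun ν h => h.le
    choose M hM using fun i => Filter.eventually_atTop.mp (hlp i)
    set n : ℕ → ℕ := fun k => (Finset.range (k+1)).sup M + k with hndef
    have hnM : ∀ i, M i ≤ n i := fun i => by
      have : M i ≤ (Finset.range (i+1)).sup M := Finset.le_sup (Finset.self_mem_range_succ i)
      simp only [hndef]; omega
    have hnmono : Monotone n := by
      intro a b hab
      have : (Finset.range (a+1)).sup M ≤ (Finset.range (b+1)).sup M :=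
        Finset.sup_mono (Finset.range_subset_range.mpr (by omega))
      simp only [hndef]; omega
    have hnge : ∀ k, k ≤ n k := fun k => by simp only [hndef]; omega
    have hbound : ∀ i ν, n i ≤ ν →
        lpAvg θ (A ν) p (fun x => f (φ (i+1)) x - f (φ i) x)
          ≤ ENNReal.ofReal ((1/2:ℝ)^i) ^ p :=
      fun i ν hν => hM i ν (le_trans (hnM i) hν)
    suffices H : ∃ g : G → ℂ, MemLpLoc θ p g ∧
        ∀ δ : ℝ, 0 < δ → ∀ Mk : ℕ, ∃ j, Mk ≤ j ∧
          besSN θ A p (fun x => f (φ j) x - g x) < ENNReal.ofReal δ by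
      obtain ⟨g, hgloc, hkey⟩ := H
      refine ⟨g, ⟨hgloc, fun ε hε => ?_⟩, ?_⟩
      · -- g is Besicovitch a.p.
        obtain ⟨j, -, hj⟩ := hkey (ε/3) (by linarith) 0
        obtain ⟨P, hP, hPj⟩ := (hf (φ j)).2 (ε/3) (by linarith)
        refine ⟨P, hP, ?_⟩
        have hPm : AEStronglyMeasurable P θ := (htrig P hP).aestronglyMeasurable
        have tri : besSN θ A p (fun x => g x - P x)
            ≤ besSN θ A p (fun x => g x - f (φ j) x)
              + besSN θ A p (fun x => f (φ j) x - P x) := by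
          have hfe : (fun x => g x - P x)
              = fun x => (g x - f (φ j) x) + (f (φ j) x - P x) := by
            funext x; ring
          rw [hfe]
          exact aux_besSN_add_le θ A hp (hgloc.1.sub (hmeasF _)) ((hmeasF _).sub hPm)
        have h1 : besSN θ A p (fun x => g x - f (φ j) x) < ENNReal.ofReal (ε/3) := by
          rw [aux_besSN_sub_rev]; exact hj
        refine lt_of_le_of_lt tri ?_
        calc besSN θ A p (fun x => g x - f (φ j) x)
              + besSN θ A p (fun x => f (φ j) x - P x)
            < ENNReal.ofReal (ε/3) + ENNReal.ofReal (ε/3) := ENNReal.add_lt_add h1 hPj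
          _ = ENNReal.ofReal (ε/3 + ε/3) := (ENNReal.ofReal_add (by linarith) (by linarith)).symm
          _ < ENNReal.ofReal ε := (ENNReal.ofReal_lt_ofReal_iff hε).mpr (by linarith)
      · -- convergence
        refine ENNReal.tendsto_nhds_zero.mpr fun ε hε => ?_
        rcases eq_or_ne ε ⊤ with rfl | hεt
        · exact Filter.Eventually.of_forall fun ν => le_top
        have hεr : 0 < ε.toReal := ENNReal.toReal_pos hε.ne' hεt
        have hδ : 0 < ε.toReal / 4 := by positivity
        obtain ⟨Nδ, hNδ⟩ := hC (ε.toReal / 4) hδ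
        obtain ⟨j, hjge, hj⟩ := hkey (ε.toReal / 4) hδ Nδ
        filter_upwards [eventually_ge_atTop Nδ] with ν hν
        have tri : besSN θ A p (fun x => f ν x - g x)
            ≤ besSN θ A p (fun x => f ν x - f (φ j) x)
              + besSN θ A p (fun x => f (φ j) x - g x) := by
          have hfe : (fun x => f ν x - g x)
              = fun x => (f ν x - f (φ j) x) + (f (φ j) x - g x) := by
            funext x; ring
          rw [hfe]
          exact aux_besSN_add_le θ A hp ((hmeasF ν).sub (hmeasF _)) ((hmeasF _).sub hgloc.1)
        have h1 : besSN θ A p (fun x => f ν x - f (φ j) x) < ENNReal.ofReal (ε.toReal / 4) :=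
          hNδ ν hν (φ j) (le_trans hjge (hφge j))
        calc besSN θ A p (fun x => f ν x - g x)
            ≤ besSN θ A p (fun x => f ν x - f (φ j) x)
              + besSN θ A p (fun x => f (φ j) x - g x) := tri
          _ ≤ ENNReal.ofReal (ε.toReal / 4) + ENNReal.ofReal (ε.toReal / 4) :=
              add_le_add h1.le hj.le
          _ = ENNReal.ofReal (ε.toReal / 4 + ε.toReal / 4) :=
              (ENNReal.ofReal_add (by linarith) (by linarith)).symm
          _ ≤ ENNReal.ofReal ε.toReal := ENNReal.ofReal_le_ofReal (by linarith)
          _ = ε := ENNReal.ofReal_toReal hεt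
    by_cases hGc : CompactSpace G
    · -- ===== compact case =====
      have hUniv : ∀ᶠ ν in atTop, A ν = Set.univ := by
        have h1 := hA.boundary Set.univ isCompact_univ
        have h2 : ∀ᶠ ν in atTop, θ (kBoundary Set.univ (A ν)) / θ (A ν) < 1 :=
          h1.eventually ((isOpen_Iio (a := (1:ℝ≥0∞))).eventually_mem (by simp))
        filter_upwards [h2] with ν hν
        by_contra hne
        have hcne : (A ν)ᶜ.Nonempty := Set.nonempty_compl.mpr hne
        have hk : kBoundary Set.univ (A ν) = Set.univ := by
          apply Set.eq_univ_of_univ_subset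
          intro x _
          by_cases hx : x ∈ closure (A ν)
          · refine Or.inr ⟨?_, hx⟩
            obtain ⟨a, ha⟩ := hcne
            have := Set.sub_mem_sub ha (Set.mem_univ (a - x))
            simpa using this
          · refine Or.inl ⟨?_, fun hxA => hx (subset_closure hxA)⟩
            have hAu : A ν + Set.univ = Set.univ := by
              apply Set.eq_univ_of_univ_subset
              intro y _
              obtain ⟨a, ha⟩ := hA.nonempty ν
              have := Set.add_mem_add ha (Set.mem_univ (y - a))
              simpa using this
            rw [hAu]
            simp
        rw [hk] at hν
        have hge : (1:ℝ≥0∞) ≤ θ Set.univ / θ (A ν) := by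
          rw [ENNReal.le_div_iff_mul_le (Or.inl (hθpos ν)) (Or.inl (hθfin ν)), one_mul]
          exact measure_mono (Set.subset_univ _)
        exact absurd hν (not_lt.mpr hge)
      have hP20 : (ENNReal.ofReal p) ≠ 0 := by
        simp only [ne_eq, ENNReal.ofReal_eq_zero, not_le]; linarith
      have hP2t : (ENNReal.ofReal p) ≠ ⊤ := ENNReal.ofReal_ne_top
      have hP2r : (ENNReal.ofReal p).toReal = p := ENNReal.toReal_ofReal hp0.le
      have heLp : ∀ u : G → ℂ,
          eLpNorm u (ENNReal.ofReal p) θ = (∫⁻ x, ENNReal.ofReal ‖u x‖ ^ p ∂θ) ^ (1/p) := by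
        intro u
        rw [MeasureTheory.eLpNorm_eq_lintegral_rpow_enorm_toReal hP20 hP2t, hP2r]
        congr 1
        exact lintegral_congr fun x => by rw [← ofReal_norm]
      have hB0 : θ Set.univ ≠ 0 := isOpen_univ.measure_ne_zero θ Set.univ_nonempty
      have hBt : θ Set.univ ≠ ⊤ := (isCompact_univ.measure_lt_top).ne
      set B : ℝ≥0∞ := θ Set.univ ^ (1/p) with hBdef
      have hBne : B ≠ 0 := aux_rpow_ne_zero hB0 hBt
      have hBnt : B ≠ ⊤ := ENNReal.rpow_ne_top_of_nonneg (by positivity) hBt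
      have hbes : ∀ u : G → ℂ, besSN θ A p u = eLpNorm u (ENNReal.ofReal p) θ / B := by
        intro u
        have hconst : limsup (fun ν => lpAvg θ (A ν) p u) atTop = lpAvg θ Set.univ p u := by
          rw [limsup_congr (hUniv.mono fun ν hν => by rw [hν])]
          exact limsup_const _
        simp only [MAP.besSN, hconst]
        rw [aux_lpAvg_eq θ _ hp0.le, MeasureTheory.setLIntegral_univ,
          ENNReal.div_rpow_of_nonneg _ _ (by positivity), heLp, hBdef]
      have hmem : ∀ j : ℕ, MemLp (f (φ j)) (ENNReal.ofReal p) θ := by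
        intro j
        refine ⟨hmeasF _, ?_⟩
        rw [heLp]
        refine ENNReal.rpow_lt_top_of_nonneg (by positivity) ?_
        have h5 := (hf (φ j)).1.2 Set.univ isCompact_univ
        rw [aux_J_bridge θ _ hp0.le, MeasureTheory.setLIntegral_univ] at h5
        exact h5.ne
      haveI : Fact (1 ≤ (ENNReal.ofReal p)) := ⟨ENNReal.one_le_ofReal.mpr hp⟩
      set L : ℕ → Lp ℂ (ENNReal.ofReal p) θ := fun j => (hmem j).toLp _ with hLdef
      have hedist : ∀ a b : ℕ, edist (L a) (L b)
          = besSN θ A p (fun x => f (φ a) x - f (φ b) x) * B := by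
        intro a b
        rw [Lp.edist_def]
        have h1 : eLpNorm (⇑(L a) - ⇑(L b)) (ENNReal.ofReal p) θ
            = eLpNorm (fun x => f (φ a) x - f (φ b) x) (ENNReal.ofReal p) θ :=
          eLpNorm_congr_ae (((hmem a).coeFn_toLp).sub ((hmem b).coeFn_toLp))
        rw [h1, hbes]
        exact (ENNReal.div_mul_cancel hBne hBnt).symm
      have hcauchy : CauchySeq L := by
        rw [EMetric.cauchySeq_iff]
        intro ε hε
        obtain ⟨δ, hδpos, hδlt⟩ : ∃ δ : ℝ, 0 < δ ∧ ENNReal.ofReal δ * B < ε := by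
          rcases eq_or_ne ε ⊤ with rfl | hεt
          · refine ⟨1, one_pos, ?_⟩
            exact ENNReal.mul_lt_top ENNReal.ofReal_lt_top hBnt.lt_top
          · have hr0 : ε / B ≠ 0 := by
              simp only [ne_eq, ENNReal.div_eq_zero_iff, not_or]
              exact ⟨hε.ne', hBnt⟩
            have hrt : ε / B ≠ ⊤ := by
              simp only [ne_eq, ENNReal.div_eq_top, not_or, not_and_or]
              exact ⟨Or.inr hBne, Or.inl hεt⟩
            have hrr : 0 < (ε / B).toReal := ENNReal.toReal_pos hr0 hrt
            refine ⟨(ε / B).toReal / 2, by positivity, ?_⟩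
            have h2 : ENNReal.ofReal ((ε / B).toReal / 2) < ε / B := by
              conv_rhs => rw [← ENNReal.ofReal_toReal hrt]
              exact (ENNReal.ofReal_lt_ofReal_iff hrr).mpr (by linarith)
            calc ENNReal.ofReal ((ε / B).toReal / 2) * B < (ε / B) * B :=
                  ENNReal.mul_lt_mul_left hBne hBnt h2
              _ = ε := ENNReal.div_mul_cancel hBne hBnt
        obtain ⟨Nδ, hNδ⟩ := hC δ hδpos
        refine ⟨Nδ, fun a ha b hb => ?_⟩
        rw [hedist a b]
        calc besSN θ A p (fun x => f (φ a) x - f (φ b) x) * B < ENNReal.ofReal δ * B :=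
              ENNReal.mul_lt_mul_left hBne hBnt
                (hNδ _ (le_trans ha (hφge a)) _ (le_trans hb (hφge b)))
          _ < ε := hδlt
      obtain ⟨gh, hgh⟩ := cauchySeq_tendsto_of_complete hcauchy
      have hgJtop : (∫⁻ x, ENNReal.ofReal ‖(gh : G → ℂ) x‖ ^ p ∂θ) ≠ ⊤ := by
        have h2 := (Lp.memLp gh).2
        rw [heLp] at h2
        intro hcon
        rw [hcon] at h2
        rw [ENNReal.top_rpow_of_pos (one_div_pos.mpr hp0)] at h2
        exact absurd h2 (lt_irrefl _)
      refine ⟨⇑gh, ⟨(Lp.memLp gh).aestronglyMeasurable, fun K hK => ?_⟩, ?_⟩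
      · rw [aux_J_bridge θ _ hp0.le]
        refine lt_of_le_of_lt ?_ hgJtop.lt_top
        rw [← MeasureTheory.setLIntegral_univ (μ := θ)
          (f := fun x => ENNReal.ofReal ‖(gh : G → ℂ) x‖ ^ p)]
        exact lintegral_mono_set (Set.subset_univ K)
      · intro δ hδ Mk
        have hεB : (0:ℝ≥0∞) < ENNReal.ofReal δ * B :=
          ENNReal.mul_pos (by simp [ENNReal.ofReal_eq_zero]; linarith) hBne
        obtain ⟨NN, hNN⟩ := EMetric.tendsto_atTop.mp hgh _ hεB
        refine ⟨max Mk NN, le_max_left _ _, ?_⟩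
        have h1 : edist (L (max Mk NN)) gh < ENNReal.ofReal δ * B := hNN _ (le_max_right _ _)
        have h2 : besSN θ A p (fun x => f (φ (max Mk NN)) x - (gh : G → ℂ) x)
            = edist (L (max Mk NN)) gh / B := by
          rw [Lp.edist_def, hbes]
          congr 1
          refine eLpNorm_congr_ae ?_
          exact (Filter.EventuallyEq.sub ((hmem _).coeFn_toLp)
            (Filter.EventuallyEq.refl _ _)).symm
        rw [h2, ENNReal.div_lt_iff (Or.inl hBne) (Or.inl hBnt)]
        exact h1
    · -- ===== noncompact case =====
      haveI : NoncompactSpace G := not_compactSpace_iff.mp hGc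
      have hθuniv : θ Set.univ = ⊤ := measure_univ_of_isAddLeftInvariant θ
      set V : CompactExhaustion G := CompactExhaustion.choice G with hVdef
      have hθtop : Tendsto (fun ν => θ (A ν)) atTop (𝓝 ⊤) := by
        refine ENNReal.tendsto_nhds_top fun nn => ?_
        obtain ⟨K, hKc, hKb⟩ : ∃ K : Set G, IsCompact K ∧ 2 * (nn:ℝ≥0∞) < θ K := by
          have hmonoV : Monotone fun j => (V j : Set G) := fun a b h => V.subset h
          have h1 : Tendsto (fun j => θ (V j)) atTop (𝓝 (θ (⋃ j, (V j : Set G)))) :=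
            tendsto_measure_iUnion_atTop hmonoV
          rw [V.iUnion_eq, hθuniv] at h1
          have h2 : ∀ᶠ j in atTop, 2 * (nn:ℝ≥0∞) < θ (V j) := by
            refine h1.eventually (lt_mem_nhds ?_)
            exact ENNReal.mul_lt_top ENNReal.ofNat_lt_top (ENNReal.natCast_lt_top nn)
          obtain ⟨j, hj⟩ := h2.exists
          exact ⟨V j, V.isCompact j, hj⟩
        have h4 : ∀ᶠ ν in atTop, θ (kBoundary K (A ν)) / θ (A ν) < 1 :=
          (hA.boundary K hKc).eventually
            ((isOpen_Iio (a := (1:ℝ≥0∞))).eventually_mem (by simp))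
        filter_upwards [h4] with ν hν
        have hbd : θ (kBoundary K (A ν)) < θ (A ν) := by
          rw [ENNReal.div_lt_iff (Or.inl (hθpos ν)) (Or.inl (hθfin ν)), one_mul] at hν
          exact hν
        obtain ⟨a, ha⟩ := hA.nonempty ν
        have hsub : a +ᵥ K ⊆ A ν ∪ kBoundary K (A ν) := by
          intro x hx
          obtain ⟨k, hk, rfl⟩ := hx
          have hxAK : a +ᵥ k ∈ A ν + K := Set.add_mem_add ha hk
          by_cases hxa : (a +ᵥ k) ∈ A ν
          · exact Or.inl hxa
          · exact Or.inr (Or.inl ⟨subset_closure hxAK, hxa⟩)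
        have hK2 : θ K ≤ 2 * θ (A ν) := by
          calc θ K = θ (a +ᵥ K) := (measure_vadd θ a K).symm
            _ ≤ θ (A ν ∪ kBoundary K (A ν)) := measure_mono hsub
            _ ≤ θ (A ν) + θ (kBoundary K (A ν)) := measure_union_le _ _
            _ ≤ θ (A ν) + θ (A ν) := add_le_add_right hbd.le _
            _ = 2 * θ (A ν) := (two_mul _).symm
        have h6 : 2 * (nn:ℝ≥0∞) < 2 * θ (A ν) := lt_of_lt_of_le hKb hK2
        exact (ENNReal.mul_lt_mul_iff_right two_ne_zero ENNReal.ofNat_ne_top).mp h6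
      set W : ℕ → Set G := fun k =>
        (⋃ ν ∈ Finset.range (n k + 1), A ν) ∪ interior (V (k+1)) with hWdef
      have hWmeas : ∀ k, MeasurableSet (W k) := by
        intro k
        refine MeasurableSet.union ?_ isOpen_interior.measurableSet
        exact MeasurableSet.biUnion (Finset.range (n k + 1)).countable_toSet
          fun ν _ => (hA.isOpen ν).measurableSet
      have hWmono : ∀ {j k : ℕ}, j ≤ k → W j ⊆ W k := by
        intro j k hjk
        have h8 := hnmono hjk
        refine Set.union_subset_union ?_ (interior_mono (V.subset (by omega)))
        refine Set.iUnion₂_subset fun ν hν => ?_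
        have h7 := Finset.mem_range.mp hν
        intro x hx
        exact Set.mem_iUnion₂.mpr ⟨ν, Finset.mem_range.mpr (by omega), hx⟩
      have hWcov : ∀ x : G, ∃ k, x ∈ W k := by
        intro x
        obtain ⟨j, hj⟩ := V.exists_mem x
        exact ⟨j, Or.inr (V.subset_interior_succ j hj)⟩
      have hWcomp : ∀ k, ∃ C : Set G, IsCompact C ∧ W k ⊆ C := by
        intro k
        refine ⟨(⋃ ν ∈ Finset.range (n k + 1), closure (A ν)) ∪ V (k+1), ?_, ?_⟩
        · exact ((Finset.range (n k + 1)).finite_toSet.isCompact_biUnion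
            fun ν _ => hA.relCompact ν).union (V.isCompact _)
        · refine Set.union_subset_union ?_ interior_subset
          exact Set.iUnion₂_mono fun ν _ => subset_closure
      have hAsubW : ∀ {ν k : ℕ}, ν ≤ n k → A ν ⊆ W k := by
        intro ν k h x hx
        exact Or.inl (Set.mem_iUnion₂.mpr ⟨ν, Finset.mem_range.mpr (by omega), hx⟩)
      set idx : G → ℕ := fun x => Nat.find (hWcov x) with hidxdef
      have hidx_mem : ∀ x, x ∈ W (idx x) := fun x => Nat.find_spec (hWcov x)
      have hidx_le : ∀ {x : G} {k : ℕ}, x ∈ W k → idx x ≤ k :=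
        fun {x k} h => Nat.find_min' (hWcov x) h
      set F' : ℕ → G → ℂ := fun j => (hmeasF (φ j)).mk (f (φ j)) with hF'def
      have hF'sm : ∀ j, StronglyMeasurable (F' j) := fun j => (hmeasF (φ j)).stronglyMeasurable_mk
      have hF'ae : ∀ j, f (φ j) =ᵐ[θ] F' j := fun j => (hmeasF (φ j)).ae_eq_mk
      set g : G → ℂ := fun x => F' (idx x) x with hgdef
      have hSmeas : ∀ k, MeasurableSet {x : G | idx x = k} := by
        intro k
        have hst : {x : G | idx x = k} = W k \ ⋃ j ∈ Finset.range k, W j := by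
          ext x
          constructor
          · intro hx
            have hxk : idx x = k := hx
            refine ⟨hxk ▸ hidx_mem x, ?_⟩
            intro hxin
            obtain ⟨j, hj, hxj⟩ := Set.mem_iUnion₂.mp hxin
            have h1 := hidx_le hxj
            have h2 := Finset.mem_range.mp hj
            omega
          · rintro ⟨hxk, hnx⟩
            have h1 : idx x ≤ k := hidx_le hxk
            show idx x = k
            by_contra hne
            have h2 : idx x < k := by omega
            exact hnx (Set.mem_iUnion₂.mpr ⟨idx x, Finset.mem_range.mpr h2, hidx_mem x⟩)
        rw [hst]
        exact (hWmeas k).diff (MeasurableSet.biUnion (Finset.range k).countable_toSet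
          fun j _ => hWmeas j)
      have hgm : Measurable g := by
        intro B hB
        have hpre : g ⁻¹' B = ⋃ k, ({x : G | idx x = k} ∩ F' k ⁻¹' B) := by
          ext x
          constructor
          · intro h
            exact Set.mem_iUnion.mpr ⟨idx x, ⟨rfl, h⟩⟩
          · intro h
            obtain ⟨k, hk, h2⟩ := Set.mem_iUnion.mp h
            have hk' : idx x = k := hk
            show g x ∈ B
            have hgx : g x = F' k x := by
              simp only [hgdef]
              rw [hk']
            rw [hgx]
            exact h2
        rw [hpre]
        exact MeasurableSet.iUnion fun k => (hSmeas k).inter ((hF'sm k).measurable hB)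
      have hgaesm : AEStronglyMeasurable g θ := hgm.aestronglyMeasurable
      -- local integrability of ‖·‖^p over compact sets, for piecewise functions
      have hpiece : ∀ (S : Set G), MeasurableSet S → (∃ C, IsCompact C ∧ S ⊆ C) →
          ∀ (k₀ : ℕ), (∀ x ∈ S, idx x ≤ k₀) → ∀ (u : G → ℂ), AEStronglyMeasurable u θ →
          (∀ (Kc : Set G), IsCompact Kc → (∫⁻ t in Kc, ENNReal.ofReal ‖u t‖ ^ p ∂θ) < ⊤) →
          (∫⁻ t in S, ENNReal.ofReal ‖u t - g t‖ ^ p ∂θ) < ⊤ := by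
        intro S hSm ⟨C, hCc, hSC⟩ k₀ hk₀ u hu huK
        have hcover : S ⊆ ⋃ k, (S ∩ {x | idx x = k}) := fun x hx =>
          Set.mem_iUnion.mpr ⟨idx x, hx, rfl⟩
        have h1 : (∫⁻ t in S, ENNReal.ofReal ‖u t - g t‖ ^ p ∂θ)
            ≤ ∑' k, ∫⁻ t in S ∩ {x | idx x = k}, ENNReal.ofReal ‖u t - g t‖ ^ p ∂θ :=
          le_trans (lintegral_mono_set hcover) (lintegral_iUnion_le _ _)
        refine lt_of_le_of_lt h1 ?_
        have hzero : ∀ k ∉ Finset.range (k₀+1),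
            (∫⁻ t in S ∩ {x | idx x = k}, ENNReal.ofReal ‖u t - g t‖ ^ p ∂θ) = 0 := by
          intro k hk
          have hemp : S ∩ {x | idx x = k} = ∅ := by
            ext x
            simp only [Set.mem_inter_iff, Set.mem_setOf_eq, Set.mem_empty_iff_false, iff_false,
              not_and]
            intro hxS hxk
            have h9 := hk₀ x hxS
            have h10 : ¬ k < k₀ + 1 := fun hcon => hk (Finset.mem_range.mpr hcon)
            omega
          rw [hemp]
          simp
        rw [tsum_eq_sum hzero]
        refine ENNReal.sum_lt_top.mpr fun k _ => ?_
        have heq : (∫⁻ t in S ∩ {x | idx x = k}, ENNReal.ofReal ‖u t - g t‖ ^ p ∂θ)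
            = ∫⁻ t in S ∩ {x | idx x = k}, ENNReal.ofReal ‖u t - F' k t‖ ^ p ∂θ := by
          refine MeasureTheory.setLIntegral_congr_fun (hSm.inter (hSmeas k))
            (fun x hx => ?_)
          have hxk : idx x = k := hx.2
          simp only [hgdef]
          rw [hxk]
        rw [heq]
        have hb : ∀ t, ENNReal.ofReal ‖u t - F' k t‖ ^ p
            ≤ (2:ℝ≥0∞)^(p:ℝ) * (ENNReal.ofReal ‖u t‖ ^ p + ENNReal.ofReal ‖F' k t‖ ^ p) := by
          intro t
          refine le_trans ?_ (aux_rpow_add_le hp0.le _ _)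
          refine ENNReal.rpow_le_rpow ?_ hp0.le
          exact le_trans (ENNReal.ofReal_le_ofReal (norm_sub_le _ _)) ENNReal.ofReal_add_le
        refine lt_of_le_of_lt (lintegral_mono hb) ?_
        rw [lintegral_const_mul' _ _ (ENNReal.rpow_ne_top_of_nonneg hp0.le ENNReal.ofNat_ne_top)]
        refine ENNReal.mul_lt_top (ENNReal.rpow_lt_top_of_nonneg hp0.le ENNReal.ofNat_ne_top) ?_
        have hma : AEMeasurable (fun t => ENNReal.ofReal ‖u t‖ ^ p)
            (θ.restrict (S ∩ {x | idx x = k})) :=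
          (ENNReal.measurable_ofReal.comp_aemeasurable
            (hu.restrict.norm.aemeasurable)).pow_const _
        rw [lintegral_add_left' hma]
        refine ENNReal.add_lt_top.mpr ⟨?_, ?_⟩
        · refine lt_of_le_of_lt (lintegral_mono_set (Set.inter_subset_left.trans hSC)) ?_
          exact huK C hCc
        · have heq2 : (∫⁻ t in S ∩ {x | idx x = k}, ENNReal.ofReal ‖F' k t‖ ^ p ∂θ)
              ≤ ∫⁻ t in C, ENNReal.ofReal ‖F' k t‖ ^ p ∂θ :=
            lintegral_mono_set (Set.inter_subset_left.trans hSC)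
          refine lt_of_le_of_lt heq2 ?_
          have heq3 : (∫⁻ t in C, ENNReal.ofReal ‖F' k t‖ ^ p ∂θ)
              = ∫⁻ t in C, ENNReal.ofReal ‖f (φ k) t‖ ^ p ∂θ := by
            refine lintegral_congr_ae (ae_restrict_of_ae ?_)
            filter_upwards [hF'ae k] with x hx
            rw [hx]
          rw [heq3, ← aux_J_bridge θ _ hp0.le]
          exact (hf (φ k)).1.2 C hCc
      have hgJ : ∀ K : Set G, IsCompact K →
          (∫⁻ t in K, ENNReal.ofReal ‖g t‖ ^ p ∂θ) < ⊤ := by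
        intro K hK
        obtain ⟨j, hj⟩ := V.exists_superset_of_isCompact hK
        have hKW : K ⊆ W j := fun x hx => Or.inr (V.subset_interior_succ j (hj hx))
        have h11 := hpiece K hK.isClosed.measurableSet ⟨K, hK, le_refl K⟩ j
          (fun x hx => hidx_le (hKW hx)) (fun _ => 0) aestronglyMeasurable_const
          (fun Kc _ => by simp [ENNReal.zero_rpow_of_pos hp0])
        simpa using h11
      have hJex : ∀ ν : ℕ, ∃ j, ν ≤ n j := fun ν => ⟨ν, hnge ν⟩
      set Jx : ℕ → ℕ := fun ν => Nat.find (hJex ν) with hJxdef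
      have hJx1 : ∀ ν, ν ≤ n (Jx ν) := fun ν => Nat.find_spec (hJex ν)
      have hJx2 : ∀ ν i, i < Jx ν → n i ≤ ν := by
        intro ν i hi
        have h12 := Nat.find_min (hJex ν) hi
        omega
      have hkeyb : ∀ m : ℕ, besSN θ A p (fun x => f (φ (m+1)) x - g x)
          ≤ ENNReal.ofReal ((1/2:ℝ)^m) := by
        intro m
        have hcfin : (∫⁻ t in W m, ENNReal.ofReal ‖f (φ (m+1)) t - g t‖ ^ p ∂θ) ≠ ⊤ := by
          refine (hpiece (W m) (hWmeas m) (hWcomp m) m (fun x hx => hidx_le hx)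
            (f (φ (m+1))) (hmeasF _) ?_).ne
          intro Kc hKc
          rw [← aux_J_bridge θ _ hp0.le]
          exact (hf (φ (m+1))).1.2 Kc hKc
        have hper : ∀ ν : ℕ, lpAvg θ (A ν) p (fun x => f (φ (m+1)) x - g x) ^ (1/p)
            ≤ (∫⁻ t in W m, ENNReal.ofReal ‖f (φ (m+1)) t - g t‖ ^ p ∂θ) ^ (1/p)
                / θ (A ν) ^ (1/p)
              + ENNReal.ofReal ((1/2:ℝ)^m) := by
          intro ν
          rw [aux_lpAvg_eq θ _ hp0.le, ENNReal.div_rpow_of_nonneg _ _ (by positivity)]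
          have hsplit : (∫⁻ t in A ν, ENNReal.ofReal ‖f (φ (m+1)) t - g t‖ ^ p ∂θ)
              ≤ (∫⁻ t in W m, ENNReal.ofReal ‖f (φ (m+1)) t - g t‖ ^ p ∂θ)
                + ∫⁻ t in A ν \ W m, ENNReal.ofReal ‖f (φ (m+1)) t - g t‖ ^ p ∂θ := by
            have hU : A ν ⊆ W m ∪ (A ν \ W m) := by
              intro x hx
              by_cases h : x ∈ W m
              · exact Or.inl h
              · exact Or.inr ⟨hx, h⟩
            refine le_trans (lintegral_mono_set hU) ?_
            rw [lintegral_union (((hA.isOpen ν).measurableSet).diff (hWmeas m)) ?_]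
            exact Set.disjoint_left.mpr fun x hx1 hx2 => hx2.2 hx1
          have htail : (∫⁻ t in A ν \ W m,
                ENNReal.ofReal ‖f (φ (m+1)) t - g t‖ ^ p ∂θ) ^ (1/p)
              ≤ ENNReal.ofReal ((1/2:ℝ)^m) * θ (A ν) ^ (1/p) := by
            have hae : ∀ᵐ x ∂(θ.restrict (A ν \ W m)),
                ENNReal.ofReal ‖f (φ (m+1)) x - g x‖ ^ p
                  ≤ (∑ i ∈ Finset.Ico (m+1) (Jx ν),
                      ENNReal.ofReal ‖f (φ (i+1)) x - f (φ i) x‖) ^ p := by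
              have hΩ : ∀ᵐ x ∂θ, ∀ j : ℕ, f (φ j) x = F' j x := by
                rw [MeasureTheory.ae_all_iff]
                exact hF'ae
              filter_upwards [MeasureTheory.ae_restrict_mem
                (((hA.isOpen ν).measurableSet).diff (hWmeas m)),
                MeasureTheory.ae_restrict_of_ae hΩ] with x hxT hxΩ
              refine ENNReal.rpow_le_rpow ?_ hp0.le
              have hidx_ge : m + 1 ≤ idx x := by
                by_contra hcon
                exact hxT.2 (hWmono (by omega) (hidx_mem x))
              have hidx_lt : idx x ≤ Jx ν := hidx_le (hAsubW (hJx1 ν) hxT.1)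
              have htele : ∑ i ∈ Finset.Ico (m+1) (idx x), (f (φ (i+1)) x - f (φ i) x)
                  = f (φ (idx x)) x - f (φ (m+1)) x := by
                rw [Finset.sum_Ico_eq_sub _ hidx_ge,
                  Finset.sum_range_sub (fun i => f (φ i) x),
                  Finset.sum_range_sub (fun i => f (φ i) x)]
                ring
              have hnorm : ‖f (φ (m+1)) x - g x‖
                  ≤ ∑ i ∈ Finset.Ico (m+1) (Jx ν), ‖f (φ (i+1)) x - f (φ i) x‖ := by
                have hgx : g x = f (φ (idx x)) x := by
                  simp only [hgdef]
                  rw [← hxΩ (idx x)]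
                rw [hgx, norm_sub_rev, ← htele]
                refine le_trans (norm_sum_le _ _) ?_
                exact Finset.sum_le_sum_of_subset_of_nonneg
                  (Finset.Ico_subset_Ico le_rfl hidx_lt) fun i _ _ => norm_nonneg _
              calc ENNReal.ofReal ‖f (φ (m+1)) x - g x‖
                  ≤ ENNReal.ofReal
                      (∑ i ∈ Finset.Ico (m+1) (Jx ν), ‖f (φ (i+1)) x - f (φ i) x‖) :=
                    ENNReal.ofReal_le_ofReal hnorm
                _ = ∑ i ∈ Finset.Ico (m+1) (Jx ν),
                      ENNReal.ofReal ‖f (φ (i+1)) x - f (φ i) x‖ :=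
                    ENNReal.ofReal_sum_of_nonneg fun i _ => norm_nonneg _
            have hstep1 : (∫⁻ t in A ν \ W m,
                  ENNReal.ofReal ‖f (φ (m+1)) t - g t‖ ^ p ∂θ) ^ (1/p)
                ≤ (∫⁻ t in A ν \ W m, (∑ i ∈ Finset.Ico (m+1) (Jx ν),
                    ENNReal.ofReal ‖f (φ (i+1)) t - f (φ i) t‖) ^ p ∂θ) ^ (1/p) :=
              ENNReal.rpow_le_rpow (lintegral_mono_ae hae) (by positivity)
            have hstep2 := aux_Lp_sum_le (θ.restrict (A ν \ W m)) hp
              (Finset.Ico (m+1) (Jx ν))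
              (fun i t => ENNReal.ofReal ‖f (φ (i+1)) t - f (φ i) t‖)
              (fun i => ENNReal.measurable_ofReal.comp_aemeasurable
                ((((hmeasF (φ (i+1))).sub (hmeasF (φ i))).restrict).norm.aemeasurable))
            have hstep3 : ∀ i ∈ Finset.Ico (m+1) (Jx ν),
                (∫⁻ t in A ν \ W m,
                    ENNReal.ofReal ‖f (φ (i+1)) t - f (φ i) t‖ ^ p ∂θ) ^ (1/p)
                  ≤ ENNReal.ofReal ((1/2:ℝ)^i) * θ (A ν) ^ (1/p) := by
              intro i hi
              have hni : n i ≤ ν := hJx2 ν i (Finset.mem_Ico.mp hi).2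
              have hlpb := hbound i ν hni
              rw [aux_lpAvg_eq θ _ hp0.le] at hlpb
              have hIle : (∫⁻ t in A ν \ W m,
                    ENNReal.ofReal ‖f (φ (i+1)) t - f (φ i) t‖ ^ p ∂θ)
                  ≤ ENNReal.ofReal ((1/2:ℝ)^i) ^ p * θ (A ν) := by
                refine le_trans (lintegral_mono_set Set.diff_subset) ?_
                exact (ENNReal.div_le_iff_le_mul (Or.inl (hθpos ν))
                  (Or.inl (hθfin ν))).mp hlpb
              calc (∫⁻ t in A ν \ W m,
                    ENNReal.ofReal ‖f (φ (i+1)) t - f (φ i) t‖ ^ p ∂θ) ^ (1/p)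
                  ≤ (ENNReal.ofReal ((1/2:ℝ)^i) ^ p * θ (A ν)) ^ (1/p) :=
                    ENNReal.rpow_le_rpow hIle (by positivity)
                _ = ENNReal.ofReal ((1/2:ℝ)^i) * θ (A ν) ^ (1/p) := by
                    rw [ENNReal.mul_rpow_of_nonneg _ _ (by positivity),
                      aux_collapse hp0.ne']
            have hsumb : ∑ i ∈ Finset.Ico (m+1) (Jx ν),
                ENNReal.ofReal ((1/2:ℝ)^i) * θ (A ν) ^ (1/p)
                  ≤ ENNReal.ofReal ((1/2:ℝ)^m) * θ (A ν) ^ (1/p) := by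
              rw [← Finset.sum_mul]
              refine mul_le_mul_left ?_ _
              rw [← ENNReal.ofReal_sum_of_nonneg fun i _ => by positivity]
              refine ENNReal.ofReal_le_ofReal ?_
              rw [Finset.sum_Ico_eq_sum_range]
              have hpa : ∀ i : ℕ, (1/2:ℝ) ^ (m + 1 + i) = (1/2:ℝ)^(m+1) * (1/2:ℝ)^i :=
                fun i => pow_add _ _ _
              rw [Finset.sum_congr rfl fun i _ => hpa i, ← Finset.mul_sum]
              calc (1/2:ℝ)^(m+1) * ∑ i ∈ Finset.range (Jx ν - (m+1)), (1/2:ℝ)^i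
                  ≤ (1/2:ℝ)^(m+1) * 2 :=
                    mul_le_mul_of_nonneg_left (sum_geometric_two_le _) (by positivity)
                _ = (1/2:ℝ)^m := by rw [pow_succ]; ring
            calc (∫⁻ t in A ν \ W m,
                  ENNReal.ofReal ‖f (φ (m+1)) t - g t‖ ^ p ∂θ) ^ (1/p)
                ≤ _ := hstep1
              _ ≤ _ := hstep2
              _ ≤ _ := le_trans (Finset.sum_le_sum hstep3) hsumb
          calc (∫⁻ t in A ν, ENNReal.ofReal ‖f (φ (m+1)) t - g t‖ ^ p ∂θ) ^ (1/p)
                / θ (A ν) ^ (1/p)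
              ≤ ((∫⁻ t in W m, ENNReal.ofReal ‖f (φ (m+1)) t - g t‖ ^ p ∂θ)
                  + ∫⁻ t in A ν \ W m, ENNReal.ofReal ‖f (φ (m+1)) t - g t‖ ^ p ∂θ) ^ (1/p)
                  / θ (A ν) ^ (1/p) :=
                ENNReal.div_le_div_right (ENNReal.rpow_le_rpow hsplit (by positivity)) _
            _ ≤ ((∫⁻ t in W m, ENNReal.ofReal ‖f (φ (m+1)) t - g t‖ ^ p ∂θ) ^ (1/p)
                  + (∫⁻ t in A ν \ W m,
                      ENNReal.ofReal ‖f (φ (m+1)) t - g t‖ ^ p ∂θ) ^ (1/p))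
                  / θ (A ν) ^ (1/p) :=
                ENNReal.div_le_div_right (ENNReal.rpow_add_le_add_rpow _ _
                  (one_div_nonneg.mpr hp0.le) (by rw [div_le_one hp0]; exact hp)) _
            _ = (∫⁻ t in W m, ENNReal.ofReal ‖f (φ (m+1)) t - g t‖ ^ p ∂θ) ^ (1/p)
                  / θ (A ν) ^ (1/p)
                + (∫⁻ t in A ν \ W m,
                    ENNReal.ofReal ‖f (φ (m+1)) t - g t‖ ^ p ∂θ) ^ (1/p)
                  / θ (A ν) ^ (1/p) := ENNReal.add_div
            _ ≤ (∫⁻ t in W m, ENNReal.ofReal ‖f (φ (m+1)) t - g t‖ ^ p ∂θ) ^ (1/p)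
                  / θ (A ν) ^ (1/p)
                + ENNReal.ofReal ((1/2:ℝ)^m) := by
                refine add_le_add_right ?_ _
                refine le_trans (ENNReal.div_le_div_right htail _) ?_
                rw [mul_div_assoc, ENNReal.div_self (aux_rpow_ne_zero (hθpos ν) (hθfin ν))
                  (ENNReal.rpow_ne_top_of_nonneg (by positivity) (hθfin ν)), mul_one]
        have hlim0 : Tendsto (fun ν =>
            (∫⁻ t in W m, ENNReal.ofReal ‖f (φ (m+1)) t - g t‖ ^ p ∂θ) ^ (1/p)
              / θ (A ν) ^ (1/p)) atTop (𝓝 0) := by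
          set cc : ℝ≥0∞ :=
            (∫⁻ t in W m, ENNReal.ofReal ‖f (φ (m+1)) t - g t‖ ^ p ∂θ) ^ (1/p) with hccdef
          have hcctop : cc ≠ ⊤ := ENNReal.rpow_ne_top_of_nonneg (by positivity) hcfin
          refine ENNReal.tendsto_nhds_zero.mpr fun ε hε => ?_
          rcases eq_or_ne ε ⊤ with rfl | hεt
          · exact Filter.Eventually.of_forall fun _ => le_top
          have hdt : cc / ε ≠ ⊤ := by
            simp only [ne_eq, ENNReal.div_eq_top, not_or, not_and_or]
            exact ⟨Or.inr hε.ne', Or.inl hcctop⟩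
          have hdp : (cc / ε) ^ p < ⊤ := ENNReal.rpow_lt_top_of_nonneg hp0.le hdt
          have hev : ∀ᶠ ν in atTop, (cc / ε) ^ p < θ (A ν) :=
            hθtop.eventually (lt_mem_nhds hdp)
          filter_upwards [hev] with ν hν
          rw [ENNReal.div_le_iff_le_mul (Or.inl (aux_rpow_ne_zero (hθpos ν) (hθfin ν)))
            (Or.inr hε.ne')]
          have h2 : cc / ε ≤ θ (A ν) ^ (1/p) := by
            calc cc / ε = ((cc / ε) ^ p) ^ (1/p) := (aux_collapse hp0.ne').symm
              _ ≤ θ (A ν) ^ (1/p) := ENNReal.rpow_le_rpow hν.le (by positivity)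
          calc cc = ε * (cc / ε) := (ENNReal.mul_div_cancel' (fun h => absurd h hε.ne') (fun h => absurd h hεt)).symm
            _ ≤ ε * θ (A ν) ^ (1/p) := mul_le_mul_right h2 _
        rw [aux_besSN_eq θ A hp0]
        calc limsup (fun ν =>
              lpAvg θ (A ν) p (fun x => f (φ (m+1)) x - g x) ^ (1/p)) atTop
            ≤ limsup (fun ν =>
                (∫⁻ t in W m, ENNReal.ofReal ‖f (φ (m+1)) t - g t‖ ^ p ∂θ) ^ (1/p)
                  / θ (A ν) ^ (1/p) + ENNReal.ofReal ((1/2:ℝ)^m)) atTop :=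
              limsup_le_limsup (Filter.Eventually.of_forall hper)
          _ ≤ limsup (fun ν =>
                (∫⁻ t in W m, ENNReal.ofReal ‖f (φ (m+1)) t - g t‖ ^ p ∂θ) ^ (1/p)
                  / θ (A ν) ^ (1/p)) atTop
              + limsup (fun _ : ℕ => ENNReal.ofReal ((1/2:ℝ)^m)) atTop :=
              aux_limsup_add_le _ _
          _ = 0 + ENNReal.ofReal ((1/2:ℝ)^m) := by
              rw [hlim0.limsup_eq, limsup_const]
          _ = ENNReal.ofReal ((1/2:ℝ)^m) := zero_add _
      refine ⟨g, ⟨hgaesm, fun K hK => ?_⟩, ?_⟩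
      · rw [aux_J_bridge θ _ hp0.le]
        exact hgJ K hK
      · intro δ hδ Mk
        obtain ⟨m0, hm0⟩ := exists_pow_lt_of_lt_one hδ (by norm_num : (1/2:ℝ) < 1)
        refine ⟨max Mk m0 + 1, by omega, ?_⟩
        refine lt_of_le_of_lt (hkeyb (max Mk m0)) ?_
        refine lt_of_le_of_lt (ENNReal.ofReal_le_ofReal
          (pow_le_pow_of_le_one (by norm_num) (by norm_num) (le_max_right Mk m0))) ?_
        exact (ENNReal.ofReal_lt_ofReal_iff hδ).mpr hm0
end
end

section
/- Let f ∈ L²_loc(G) and let 𝒜 be a van Hove sequence. Then f ∈ Bap²_𝒜(G) if and only if the following three conditions hold: (a) for each χ ∈ Ĝ the Fourier–Bohr coefficient a_χ^𝒜(f) exists; (b) the mean M_𝒜(|f|²) exists; and (c) the Parseval equality M_𝒜(|f|²) = Σ_{χ∈Ĝ} |a_χ^𝒜(f)|² holds (in particular a_χ^𝒜(f) ≠ 0 for at most countably many χ and the family (|a_χ^𝒜(f)|²)_{χ∈Ĝ} is summable). -/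
open MeasureTheory Filter Topology
open scoped ENNReal Pointwise

noncomputable section

open MAP

namespace P11
set_option linter.unusedSectionVars false

open MAP

variable {G : Type*} [AddCommGroup G] [TopologicalSpace G] [IsTopologicalAddGroup G]
    [LocallyCompactSpace G] [SigmaCompactSpace G] [T2Space G]
    [MeasurableSpace G] [BorelSpace G]
    (θ : Measure G) [θ.IsAddHaarMeasure]
    (A : ℕ → Set G)

/-- Normalized restricted measure. -/
def mu (n : ℕ) : Measure G := (θ (A n))⁻¹ • θ.restrict (A n)

variable {θ A}

section Basic

variable (hA : IsVanHove θ A)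
include hA

lemma measA (n : ℕ) : MeasurableSet (A n) := (hA.isOpen n).measurableSet

lemma posA (n : ℕ) : 0 < θ (A n) := (hA.isOpen n).measure_pos θ (hA.nonempty n)

lemma finA (n : ℕ) : θ (A n) < ⊤ :=
  lt_of_le_of_lt (measure_mono subset_closure) (hA.relCompact n).measure_lt_top

lemma posV (n : ℕ) : 0 < (θ (A n)).toReal :=
  ENNReal.toReal_pos (posA hA n).ne' (finA hA n).ne

lemma mu_prob (n : ℕ) : IsProbabilityMeasure (mu θ A n) := by
  constructor
  rw [mu, Measure.smul_apply, Measure.restrict_apply MeasurableSet.univ,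
    Set.univ_inter, smul_eq_mul, ENNReal.inv_mul_cancel (posA hA n).ne' (finA hA n).ne]

omit hA in
lemma integral_mu (n : ℕ) (g : G → ℂ) :
    ∫ x, g x ∂(mu θ A n) = cAvg θ (A n) g := by
  rw [mu, integral_smul_measure, cAvg, ENNReal.toReal_inv, div_eq_inv_mul,
    Complex.real_smul, Complex.ofReal_inv]

omit hA in
lemma integral_mu_real (n : ℕ) (u : G → ℝ) :
    ∫ x, u x ∂(mu θ A n) = (∫ t in A n, u t ∂θ) / (θ (A n)).toReal := by
  rw [mu, integral_smul_measure, ENNReal.toReal_inv, smul_eq_mul, div_eq_inv_mul]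

/-- `f ∈ L²_loc` gives membership in `L²(mu n)`. -/
lemma memLp_mu (n : ℕ) {g : G → ℂ} (hg : MemLpLoc θ 2 g) : MemLp g 2 (mu θ A n) := by
  have h1 : MemLp g 2 (θ.restrict (A n)) := by
    refine ⟨hg.1.restrict, ?_⟩
    rw [eLpNorm_eq_lintegral_rpow_enorm_toReal (by norm_num) (by norm_num)]
    have hb : (∫⁻ t in A n, (‖g t‖₊ : ℝ≥0∞) ^ ((2 : ℝ≥0∞).toReal) ∂θ) < ⊤ := by
      refine lt_of_le_of_lt (lintegral_mono_set subset_closure) ?_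
      have := hg.2 (closure (A n)) (hA.relCompact n)
      refine lt_of_le_of_lt (le_of_eq ?_) this
      refine setLIntegral_congr_fun (hA.relCompact n).measurableSet ?_
      intro t _
      dsimp only
      rw [← ENNReal.ofReal_coe_nnreal, coe_nnnorm,
        ENNReal.ofReal_rpow_of_nonneg (norm_nonneg _) (by norm_num)]
      norm_num
    exact ENNReal.rpow_lt_top_of_nonneg (by norm_num) hb.ne
  exact h1.smul_measure (by simp [(posA hA n).ne'])

/-- bounded continuous functions are in `L²(mu n)`. -/
lemma memLp_mu_of_bdd (n : ℕ) {g : G → ℂ} (hgc : Continuous g) (C : ℝ)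
    (hgb : ∀ x, ‖g x‖ ≤ C) : MemLp g 2 (mu θ A n) := by
  have := mu_prob hA (θ := θ) n
  exact MemLp.of_bound hgc.aestronglyMeasurable C (Filter.Eventually.of_forall hgb)

end Basic


section L2

lemma inner_toLp {ν : Measure G} {g h : G → ℂ} (hg : MemLp g 2 ν) (hh : MemLp h 2 ν) :
    (inner ℂ (hg.toLp g) (hh.toLp h) : ℂ) = ∫ x, (starRingEnd ℂ) (g x) * h x ∂ν := by
  rw [MeasureTheory.L2.inner_def]
  refine integral_congr_ae ?_
  filter_upwards [hg.coeFn_toLp, hh.coeFn_toLp] with x h1 h2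
  rw [h1, h2, RCLike.inner_apply']

lemma normSq_toLp {ν : Measure G} {g : G → ℂ} (hg : MemLp g 2 ν) :
    ‖hg.toLp g‖ ^ 2 = ∫ x, ‖g x‖ ^ 2 ∂ν := by
  rw [← inner_self_eq_norm_sq (𝕜 := ℂ), inner_toLp hg hg]
  have h : (fun x => (starRingEnd ℂ) (g x) * g x)
      = fun x => (RCLike.ofReal (K := ℂ) (‖g x‖ ^ 2)) := by
    funext x
    rw [RCLike.conj_mul]
    norm_cast
  rw [h, integral_ofReal, RCLike.ofReal_re]

lemma coeFn_sum_smul {ν : Measure G} {ι : Type*} (s : Finset ι) (c : ι → ℂ) (g : ι → G → ℂ)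
    (hg : ∀ i, MemLp (g i) 2 ν) :
    (((∑ i ∈ s, c i • (hg i).toLp (g i)) : Lp ℂ 2 ν) : G → ℂ)
      =ᵐ[ν] fun x => ∑ i ∈ s, c i * g i x := by
  classical
  induction s using Finset.induction_on with
  | empty => simp only [Finset.sum_empty]; exact Lp.coeFn_zero ℂ 2 ν
  | @insert a s ha ih =>
    have h1 := Lp.coeFn_add (c a • (hg a).toLp (g a)) (∑ i ∈ s, c i • (hg i).toLp (g i))
    have h2 := Lp.coeFn_smul (c a) ((hg a).toLp (g a))
    have h3 := (hg a).coeFn_toLp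
    simp only [Finset.sum_insert ha]
    filter_upwards [h1, h2, h3, ih] with x e1 e2 e3 e4
    simp only [Pi.add_apply, Pi.smul_apply, smul_eq_mul] at e1 e2 ⊢
    rw [e1, e2, e3, e4]

lemma toLp_sum {ν : Measure G} {ι : Type*} (s : Finset ι) (c : ι → ℂ) (g : ι → G → ℂ)
    (hg : ∀ i, MemLp (g i) 2 ν) (hS : MemLp (fun x => ∑ i ∈ s, c i * g i x) 2 ν) :
    hS.toLp _ = ∑ i ∈ s, c i • (hg i).toLp (g i) := by
  refine Lp.ext ?_
  refine hS.coeFn_toLp.trans ?_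
  exact (coeFn_sum_smul s c g hg).symm

end L2

section CharFacts

lemma char_continuous (χ : Char G) : Continuous fun t => ((χ : C(G, ℂ)) t) :=
  (χ : C(G, ℂ)).continuous

lemma char_norm (χ : Char G) (t : G) : ‖(χ : C(G, ℂ)) t‖ = 1 := χ.2.1 t

lemma char_addmul (χ : Char G) (s t : G) :
    (χ : C(G, ℂ)) (s + t) = (χ : C(G, ℂ)) s * (χ : C(G, ℂ)) t := χ.2.2 s t

variable (hA : IsVanHove θ A)
include hA

lemma memLp_char (n : ℕ) (χ : Char G) :
    MemLp (fun t => (χ : C(G, ℂ)) t) 2 (mu θ A n) :=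
  memLp_mu_of_bdd hA n (char_continuous χ) 1 fun x => le_of_eq (char_norm χ x)

lemma norm_char_toLp (n : ℕ) (χ : Char G) : ‖(memLp_char hA n χ).toLp _‖ = 1 := by
  have := mu_prob hA (θ := θ) n
  have h := normSq_toLp (memLp_char hA n χ)
  have h2 : (∫ x, ‖(χ : C(G, ℂ)) x‖ ^ 2 ∂(mu θ A n)) = 1 := by
    have : (fun x => ‖(χ : C(G, ℂ)) x‖ ^ 2) = fun _ => (1 : ℝ) := by
      funext x; rw [char_norm]; norm_num
    rw [this, integral_const]
    simp
  rw [h2] at h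
  have hn := norm_nonneg ((memLp_char hA n χ).toLp _)
  nlinarith

lemma inner_char {n : ℕ} (χ : Char G) {g : G → ℂ} (hg : MemLp g 2 (mu θ A n)) :
    (inner ℂ ((memLp_char hA n χ).toLp _) (hg.toLp g) : ℂ)
      = cAvg θ (A n) fun t => (starRingEnd ℂ) ((χ : C(G, ℂ)) t) * g t := by
  rw [inner_toLp, integral_mu]

end CharFacts
section Bes

variable (hA : IsVanHove θ A)
include hA

lemma lpAvg_eq (n : ℕ) {g : G → ℂ} (hg : MemLp g 2 (mu θ A n)) :
    lpAvg θ (A n) 2 g = ENNReal.ofReal (‖hg.toLp g‖ ^ 2) := by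
  have hrw : ∀ x : G, ENNReal.ofReal (‖g x‖ ^ (2 : ℝ)) = (‖g x‖₊ : ℝ≥0∞) ^ (2 : ℝ) := by
    intro x
    rw [← ENNReal.ofReal_coe_nnreal, coe_nnnorm,
      ENNReal.ofReal_rpow_of_nonneg (norm_nonneg _) (by norm_num)]
  have step1 : lpAvg θ (A n) 2 g = ∫⁻ x, (‖g x‖₊ : ℝ≥0∞) ^ (2 : ℝ) ∂(mu θ A n) := by
    rw [mu, lintegral_smul_measure, lpAvg, ENNReal.div_eq_inv_mul]
    congr 1
    exact lintegral_congr hrw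
  have hint : Integrable (fun x => ‖g x‖ ^ 2) (mu θ A n) := by
    have h0 := hg.integrable_norm_rpow (by norm_num) (by norm_num)
    have : (fun x => ‖g x‖ ^ ((2 : ℝ≥0∞).toReal)) = fun x => ‖g x‖ ^ 2 := by
      funext x
      rw [ENNReal.toReal_ofNat, ← Real.rpow_natCast ‖g x‖ 2]
      norm_num
    rwa [this] at h0
  have step2 : (∫⁻ x, (‖g x‖₊ : ℝ≥0∞) ^ (2 : ℝ) ∂(mu θ A n))
      = ENNReal.ofReal (∫ x, ‖g x‖ ^ 2 ∂(mu θ A n)) := by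
    rw [ofReal_integral_eq_lintegral_ofReal hint
      (Filter.Eventually.of_forall fun x => by positivity)]
    refine lintegral_congr fun x => ?_
    rw [← hrw x, ← Real.rpow_natCast ‖g x‖ 2]
    norm_num
  rw [step1, step2, normSq_toLp hg]

lemma besSN_eq {g : G → ℂ} (hg : ∀ n, MemLp g 2 (mu θ A n)) :
    besSN θ A 2 g
      = (limsup (fun n => ENNReal.ofReal (‖(hg n).toLp g‖ ^ 2)) atTop) ^ (1 / 2 : ℝ) := by
  rw [besSN]
  congr 1
  apply Filter.limsup_congr
  filter_upwards with n
  exact lpAvg_eq hA n (hg n)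

lemma besSN_lt_of_tendsto {g : G → ℂ} (hg : ∀ n, MemLp g 2 (mu θ A n)) {L ε : ℝ}
    (hL : Tendsto (fun n => ‖(hg n).toLp g‖ ^ 2) atTop (𝓝 L)) (hLe : L < ε ^ 2)
    (hε : 0 < ε) : besSN θ A 2 g < ENNReal.ofReal ε := by
  have hL0 : 0 ≤ L := ge_of_tendsto' hL fun n => by positivity
  rw [besSN_eq hA hg]
  have hls : limsup (fun n => ENNReal.ofReal (‖(hg n).toLp g‖ ^ 2)) atTop
      = ENNReal.ofReal L :=
    ((ENNReal.continuous_ofReal.tendsto L).comp hL).limsup_eq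
  rw [hls, ENNReal.ofReal_rpow_of_nonneg hL0 (by norm_num)]
  rw [ENNReal.ofReal_lt_ofReal_iff hε]
  have h2 : L ^ (1 / 2 : ℝ) < (ε ^ 2) ^ (1 / 2 : ℝ) :=
    Real.rpow_lt_rpow hL0 hLe (by norm_num)
  have h3 : (ε ^ 2) ^ (1 / 2 : ℝ) = ε := by
    rw [← Real.rpow_natCast ε 2, ← Real.rpow_mul hε.le]
    norm_num
  rwa [h3] at h2

lemma eventually_lt_of_besSN_lt {g : G → ℂ} (hg : ∀ n, MemLp g 2 (mu θ A n)) {ε : ℝ}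
    (hε : 0 < ε) (h : besSN θ A 2 g < ENNReal.ofReal ε) :
    ∀ᶠ n in atTop, ‖(hg n).toLp g‖ < ε := by
  rw [besSN_eq hA hg] at h
  set x := limsup (fun n => ENNReal.ofReal (‖(hg n).toLp g‖ ^ 2)) atTop with hx
  have h2 : (x ^ (1 / 2 : ℝ)) ^ (2 : ℝ) < (ENNReal.ofReal ε) ^ (2 : ℝ) :=
    ENNReal.rpow_lt_rpow h (by norm_num)
  have h3 : (x ^ (1 / 2 : ℝ)) ^ (2 : ℝ) = x := by
    rw [← ENNReal.rpow_mul]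
    norm_num
  have h4 : (ENNReal.ofReal ε) ^ (2 : ℝ) = ENNReal.ofReal (ε ^ 2) := by
    rw [ENNReal.ofReal_rpow_of_nonneg hε.le (by norm_num), ← Real.rpow_natCast ε 2]
    norm_num
  rw [h3, h4] at h2
  have h5 := eventually_lt_of_limsup_lt h2
  filter_upwards [h5] with n hn
  rw [ENNReal.ofReal_lt_ofReal_iff (by positivity)] at hn
  exact lt_of_pow_lt_pow_left₀ 2 hε.le hn

end Bes
section Ortho

lemma integrableOn_bdd {g : G → ℂ} (hgc : Continuous g) (C : ℝ) (hgb : ∀ x, ‖g x‖ ≤ C)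
    {S : Set G} (hS : θ S < ⊤) : IntegrableOn g S θ := by
  have : IsFiniteMeasure (θ.restrict S) := ⟨by rwa [Measure.restrict_apply_univ]⟩
  exact (MemLp.of_bound hgc.aestronglyMeasurable.restrict C
    (Filter.Eventually.of_forall hgb)).integrable le_rfl

variable (hA : IsVanHove θ A)
include hA

lemma finKB (n : ℕ) {K : Set G} (hK : IsCompact K) : θ (kBoundary K (A n)) < ⊤ := by
  have hsub : kBoundary K (A n) ⊆ (closure (A n) + K) ∪ closure (A n) := by
    rintro x (⟨hx1, -⟩ | ⟨-, hx2⟩)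
    · left
      have : closure (A n + K) ⊆ closure (A n) + K := by
        refine closure_minimal ?_ (((hA.relCompact n).add hK).isClosed)
        exact Set.add_subset_add_right subset_closure
      exact this hx1
    · right; exact hx2
  refine lt_of_le_of_lt (measure_mono hsub) ?_
  exact lt_of_le_of_lt (measure_union_le _ _)
    (ENNReal.add_lt_top.2 ⟨((hA.relCompact n).add hK).measure_lt_top,
      (hA.relCompact n).measure_lt_top⟩)

lemma vadd_diff_tendsto (s : G) :
    Tendsto (fun n => (θ ((s +ᵥ A n) \ A n)).toReal / (θ (A n)).toReal
      + (θ (A n \ (s +ᵥ A n))).toReal / (θ (A n)).toReal) atTop (𝓝 0) := by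
  have hK : IsCompact ({s, -s} : Set G) := (Set.toFinite ({s, -s} : Set G)).isCompact
  have hVH := hA.boundary _ hK
  have hsub1 : ∀ n, (s +ᵥ A n) \ A n ⊆ kBoundary {s, -s} (A n) := by
    intro n x ⟨hx1, hx2⟩
    obtain ⟨a, ha, rfl⟩ := hx1
    left
    refine ⟨subset_closure ?_, hx2⟩
    show s +ᵥ a ∈ A n + {s, -s}
    rw [vadd_eq_add, add_comm s a]
    exact Set.add_mem_add ha (Set.mem_insert _ _)
  have hsub2 : ∀ n, A n \ (s +ᵥ A n) ⊆ kBoundary {s, -s} (A n) := by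
    intro n x ⟨hx1, hx2⟩
    right
    refine ⟨⟨x - s, ?_, -s, by simp, by
      show (x - s) - (-s) = x
      rw [sub_neg_eq_add, sub_add_cancel]⟩, subset_closure hx1⟩
    intro hxs
    refine hx2 ⟨x - s, hxs, ?_⟩
    show s +ᵥ (x - s) = x
    rw [vadd_eq_add, add_comm, sub_add_cancel]
  have key : ∀ (D : ℕ → Set G), (∀ n, D n ⊆ kBoundary {s, -s} (A n)) →
      Tendsto (fun n => (θ (D n)).toReal / (θ (A n)).toReal) atTop (𝓝 0) := by
    intro D hD
    have h1 : Tendsto (fun n => θ (D n) / θ (A n)) atTop (𝓝 0) := by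
      refine tendsto_of_tendsto_of_tendsto_of_le_of_le tendsto_const_nhds hVH
        (fun n => zero_le) (fun n => ?_)
      exact ENNReal.div_le_div_right (measure_mono (hD n)) _
    have h2 := (ENNReal.tendsto_toReal (by simp)).comp h1
    simp only [Function.comp_def, ENNReal.toReal_div] at h2
    simpa using h2
  have t1 := key _ hsub1
  have t2 := key _ hsub2
  simpa using t1.add t2

lemma ortho_aux (g : G → ℂ) (hgc : Continuous g) (hgn : ∀ x, ‖g x‖ = 1)
    (hgm : ∀ x y, g (x + y) = g x * g y) (s : G) (hgs : g s ≠ 1) :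
    Tendsto (fun n => (∫ t in A n, g t ∂θ) / (((θ (A n)).toReal : ℝ) : ℂ)) atTop (𝓝 0) := by
  have hint : ∀ n, ∀ S : Set G, S ⊆ (s +ᵥ A n) ∪ A n → IntegrableOn g S θ := by
    intro n S hs
    refine (integrableOn_bdd (θ := θ) hgc 1 (fun x => (hgn x).le) ?_).mono_set hs
    refine lt_of_le_of_lt (measure_union_le _ _) (ENNReal.add_lt_top.2 ⟨?_, finA hA n⟩)
    rw [measure_vadd]
    exact finA hA n
  have hBmeas : ∀ n, MeasurableSet (s +ᵥ A n) := fun n =>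
    ((hA.isOpen n).vadd s).measurableSet
  have hinv : ∀ n, ∫ t in s +ᵥ A n, g t ∂θ = g s * ∫ t in A n, g t ∂θ := by
    intro n
    have hpre : (fun x => s + x) ⁻¹' (s +ᵥ A n) = A n := by
      ext x
      simp [Set.mem_vadd_set_iff_neg_vadd_mem]
    have := MeasurePreserving.setIntegral_preimage_emb
      (measurePreserving_add_left θ s)
      (MeasurableEquiv.addLeft s).measurableEmbedding g (s +ᵥ A n)
    rw [hpre] at this
    rw [← this]
    simp_rw [hgm s]
    exact integral_const_mul _ _
  have hsplit : ∀ n, ∀ (B C : Set G), MeasurableSet B → MeasurableSet C →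
      B ⊆ (s +ᵥ A n) ∪ A n → C ⊆ (s +ᵥ A n) ∪ A n →
      ∫ t in B, g t ∂θ - ∫ t in C, g t ∂θ
        = ∫ t in B \ C, g t ∂θ - ∫ t in C \ B, g t ∂θ := by
    intro n B C hB hC hBs hCs
    have eB : ∫ t in B, g t ∂θ = ∫ t in B \ C, g t ∂θ + ∫ t in B ∩ C, g t ∂θ := by
      rw [← setIntegral_union Set.disjoint_sdiff_inter (hB.inter hC)
        ((hint n _ hBs).mono_set Set.diff_subset)
        ((hint n _ hBs).mono_set Set.inter_subset_left), Set.diff_union_inter]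
    have eC : ∫ t in C, g t ∂θ = ∫ t in C \ B, g t ∂θ + ∫ t in C ∩ B, g t ∂θ := by
      rw [← setIntegral_union Set.disjoint_sdiff_inter (hC.inter hB)
        ((hint n _ hCs).mono_set Set.diff_subset)
        ((hint n _ hCs).mono_set Set.inter_subset_left), Set.diff_union_inter]
    rw [eB, eC, Set.inter_comm C B]
    ring
  set I : ℕ → ℂ := fun n => ∫ t in A n, g t ∂θ with hI
  set e : ℕ → ℝ := fun n => (θ ((s +ᵥ A n) \ A n)).toReal / (θ (A n)).toReal
      + (θ (A n \ (s +ᵥ A n))).toReal / (θ (A n)).toReal with he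
  have hbound : ∀ n, ‖g s - 1‖ * ‖I n / (((θ (A n)).toReal : ℝ) : ℂ)‖ ≤ e n := by
    intro n
    have h1 : (g s - 1) * I n = ∫ t in s +ᵥ A n, g t ∂θ - ∫ t in A n, g t ∂θ := by
      rw [hinv n]; ring
    have h2 := hsplit n (s +ᵥ A n) (A n) (hBmeas n) (measA hA n)
      Set.subset_union_left Set.subset_union_right
    have h3 : ‖(g s - 1) * I n‖
        ≤ (θ ((s +ᵥ A n) \ A n)).toReal + (θ (A n \ (s +ᵥ A n))).toReal := by
      have hfin1 : θ ((s +ᵥ A n) \ A n) < ⊤ :=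
        lt_of_le_of_lt (measure_mono Set.diff_subset) (by rw [measure_vadd]; exact finA hA n)
      have hfin2 : θ (A n \ (s +ᵥ A n)) < ⊤ :=
        lt_of_le_of_lt (measure_mono Set.diff_subset) (finA hA n)
      have hb1 := norm_setIntegral_le_of_norm_le_const hfin1 (fun x _ => (hgn x).le)
      have hb2 := norm_setIntegral_le_of_norm_le_const hfin2 (fun x _ => (hgn x).le)
      rw [one_mul] at hb1 hb2
      rw [h1, h2]
      exact le_trans (norm_sub_le _ _) (add_le_add hb1 hb2)
    have hV := posV hA n
    have h3' : ‖g s - 1‖ * ‖I n‖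
        ≤ (θ ((s +ᵥ A n) \ A n)).toReal + (θ (A n \ (s +ᵥ A n))).toReal := by
      rw [← norm_mul]
      exact h3
    have h4 : ‖I n / (((θ (A n)).toReal : ℝ) : ℂ)‖ = ‖I n‖ / (θ (A n)).toReal := by
      rw [norm_div, Complex.norm_real, Real.norm_eq_abs, abs_of_pos hV]
    rw [h4, he]
    calc ‖g s - 1‖ * (‖I n‖ / (θ (A n)).toReal)
        = ‖g s - 1‖ * ‖I n‖ / (θ (A n)).toReal := by ring
      _ ≤ ((θ ((s +ᵥ A n) \ A n)).toReal + (θ (A n \ (s +ᵥ A n))).toReal)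
            / (θ (A n)).toReal := (div_le_div_iff_of_pos_right hV).2 h3'
      _ = _ := by rw [add_div]
  have hgs1 : 0 < ‖g s - 1‖ := by
    rw [norm_pos_iff]
    exact sub_ne_zero.2 hgs
  rw [tendsto_zero_iff_norm_tendsto_zero]
  have he0 : Tendsto e atTop (𝓝 0) := vadd_diff_tendsto hA s
  have hsq : ∀ n, ‖I n / (((θ (A n)).toReal : ℝ) : ℂ)‖ ≤ ‖g s - 1‖⁻¹ * e n := by
    intro n
    rw [← inv_mul_cancel_left₀ hgs1.ne' ‖I n / _‖]
    exact mul_le_mul_of_nonneg_left (hbound n) (inv_nonneg.2 hgs1.le)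
  exact squeeze_zero (fun n => norm_nonneg _) hsq (by simpa using he0.const_mul ‖g s - 1‖⁻¹)

open scoped Classical in
lemma char_ortho (χ ψ : Char G) :
    Tendsto (fun n => cAvg θ (A n)
        (fun t => (starRingEnd ℂ) ((χ : C(G, ℂ)) t) * (ψ : C(G, ℂ)) t)) atTop
      (𝓝 (if χ = ψ then (1 : ℂ) else 0)) := by
  classical
  by_cases hcc : χ = ψ
  · subst hcc
    rw [if_pos rfl]
    have hfun : ∀ t : G, (starRingEnd ℂ) ((χ : C(G, ℂ)) t) * (χ : C(G, ℂ)) t = 1 := by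
      intro t
      rw [RCLike.conj_mul, char_norm]
      norm_num
    have : ∀ n, cAvg θ (A n)
        (fun t => (starRingEnd ℂ) ((χ : C(G, ℂ)) t) * (χ : C(G, ℂ)) t) = 1 := by
      intro n
      simp_rw [cAvg, hfun]
      rw [setIntegral_const]
      rw [Complex.real_smul, mul_one, measureReal_def, div_self]
      exact_mod_cast (posV hA n).ne'
    simp_rw [this]
    exact tendsto_const_nhds
  · rw [if_neg hcc]
    set g : G → ℂ := fun t => (starRingEnd ℂ) ((χ : C(G, ℂ)) t) * (ψ : C(G, ℂ)) t with hg
    have hgc : Continuous g :=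
      (RCLike.continuous_conj.comp (char_continuous χ)).mul (char_continuous ψ)
    have hgn : ∀ x, ‖g x‖ = 1 := by
      intro x
      rw [hg, norm_mul, RCLike.norm_conj, char_norm, char_norm, one_mul]
    have hgm : ∀ x y, g (x + y) = g x * g y := by
      intro x y
      simp only [hg, char_addmul, map_mul]
      ring
    have hex : ∃ s, g s ≠ 1 := by
      by_contra hno
      push_neg at hno
      apply hcc
      have : ∀ s : G, (χ : C(G, ℂ)) s = (ψ : C(G, ℂ)) s := by
        intro t
        have h1 := hno t
        have h2 : (starRingEnd ℂ) ((χ : C(G, ℂ)) t) * (χ : C(G, ℂ)) t = 1 := by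
          rw [RCLike.conj_mul, char_norm]; norm_num
        have hne : (starRingEnd ℂ) ((χ : C(G, ℂ)) t) ≠ 0 := by
          simp only [ne_eq, map_eq_zero]
          intro h0
          have := char_norm χ t
          rw [h0] at this
          simp at this
        exact mul_left_cancel₀ hne (by rw [h2]; exact h1.symm)
      exact Subtype.ext (ContinuousMap.ext this)
    obtain ⟨s, hgs⟩ := hex
    exact ortho_aux hA g hgc hgn hgm s hgs

end Ortho
section Key

variable (hA : IsVanHove θ A)

/-- The character as an element of `L²(mu n)`. -/
def XC (n : ℕ) (χ : Char G) : Lp ℂ 2 (mu θ A n) := (memLp_char hA n χ).toLp _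

lemma norm_XC (n : ℕ) (χ : Char G) : ‖XC hA n χ‖ = 1 := norm_char_toLp hA n χ

open scoped Classical in
lemma inner_XC_tendsto (χ ψ : Char G) :
    Tendsto (fun n => (inner ℂ (XC hA n χ) (XC hA n ψ) : ℂ)) atTop
      (𝓝 (if χ = ψ then 1 else 0)) := by
  have heq : ∀ n, (inner ℂ (XC hA n χ) (XC hA n ψ) : ℂ)
      = cAvg θ (A n) (fun t => (starRingEnd ℂ) ((χ : C(G, ℂ)) t) * (ψ : C(G, ℂ)) t) :=
    fun n => inner_char hA χ (memLp_char hA n ψ)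
  simp only [heq]
  exact char_ortho hA χ ψ

variable {f : G → ℂ} (hfL : MemLpLoc θ 2 f)

/-- `f` as an element of `L²(mu n)`. -/
def FC (n : ℕ) : Lp ℂ 2 (mu θ A n) := (memLp_mu hA n hfL).toLp f

lemma inner_XF_eq (n : ℕ) (χ : Char G) :
    (inner ℂ (XC hA n χ) (FC hA hfL n) : ℂ)
      = cAvg θ (A n) (fun t => (starRingEnd ℂ) ((χ : C(G, ℂ)) t) * f t) :=
  inner_char hA χ (memLp_mu hA n hfL)

lemma inner_XF_tendsto {χ : Char G} {c : ℂ} (hc : FBTendsto θ A f χ c) :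
    Tendsto (fun n => (inner ℂ (XC hA n χ) (FC hA hfL n) : ℂ)) atTop (𝓝 c) := by
  simp only [inner_XF_eq hA hfL]
  exact hc

lemma normSq_FC_eq (n : ℕ) :
    ‖FC hA hfL n‖ ^ 2 = (∫ t in A n, ‖f t‖ ^ 2 ∂θ) / (θ (A n)).toReal := by
  rw [FC, normSq_toLp, integral_mu_real]

/-- The trig-polynomial projection as an element of `L²(mu n)`. -/
def YC (F : Finset (Char G)) (d : Char G → ℂ) (n : ℕ) : Lp ℂ 2 (mu θ A n) :=
  ∑ χ ∈ F, d χ • XC hA n χ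

lemma key_tendsto {a : Char G → ℂ} {M : ℝ}
    (ha : ∀ χ, FBTendsto θ A f χ (a χ))
    (hM : Tendsto (fun n => (∫ t in A n, ‖f t‖ ^ 2 ∂θ) / (θ (A n)).toReal) atTop (𝓝 M))
    (F : Finset (Char G)) (d : Char G → ℂ) :
    Tendsto (fun n => ‖FC hA hfL n - YC hA F d n‖ ^ 2) atTop
      (𝓝 (M - 2 * (∑ χ ∈ F, d χ * (starRingEnd ℂ) (a χ)).re + ∑ χ ∈ F, ‖d χ‖ ^ 2)) := by
  classical
  have hF : ∀ n, ‖FC hA hfL n - YC hA F d n‖ ^ 2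
      = ‖FC hA hfL n‖ ^ 2
        - 2 * RCLike.re (inner ℂ (FC hA hfL n) (YC hA F d n) : ℂ)
        + ‖YC hA F d n‖ ^ 2 := fun n => norm_sub_sq _ _
  have t1 : Tendsto (fun n => ‖FC hA hfL n‖ ^ 2) atTop (𝓝 M) := by
    have : (fun n => ‖FC hA hfL n‖ ^ 2)
        = fun n => (∫ t in A n, ‖f t‖ ^ 2 ∂θ) / (θ (A n)).toReal :=
      funext fun n => normSq_FC_eq hA hfL n
    rw [this]; exact hM
  have t2 : Tendsto (fun n => (inner ℂ (FC hA hfL n) (YC hA F d n) : ℂ)) atTop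
      (𝓝 (∑ χ ∈ F, d χ * (starRingEnd ℂ) (a χ))) := by
    have heq : ∀ n, (inner ℂ (FC hA hfL n) (YC hA F d n) : ℂ)
        = ∑ χ ∈ F, d χ * (starRingEnd ℂ) (inner ℂ (XC hA n χ) (FC hA hfL n) : ℂ) := by
      intro n
      rw [YC, inner_sum]
      refine Finset.sum_congr rfl fun χ _ => ?_
      rw [inner_smul_right, ← inner_conj_symm]
    simp only [heq]
    refine tendsto_finset_sum _ fun χ _ => ?_
    exact (RCLike.continuous_conj.tendsto _).comp (inner_XF_tendsto hA hfL (ha χ))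
      |>.const_mul (d χ)
  have t3 : Tendsto (fun n => ‖YC hA F d n‖ ^ 2) atTop (𝓝 (∑ χ ∈ F, ‖d χ‖ ^ 2)) := by
    have heq : ∀ n, (inner ℂ (YC hA F d n) (YC hA F d n) : ℂ)
        = ∑ χ ∈ F, ∑ ψ ∈ F, ((starRingEnd ℂ) (d χ) * d ψ)
            * (inner ℂ (XC hA n χ) (XC hA n ψ) : ℂ) := by
      intro n
      rw [YC, sum_inner]
      refine Finset.sum_congr rfl fun χ _ => ?_
      rw [inner_sum]
      refine Finset.sum_congr rfl fun ψ _ => ?_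
      rw [inner_smul_left, inner_smul_right]
      ring
    have hlim : Tendsto (fun n => (inner ℂ (YC hA F d n) (YC hA F d n) : ℂ)) atTop
        (𝓝 (∑ χ ∈ F, ((‖d χ‖ : ℂ)) ^ 2)) := by
      simp only [heq]
      have hval : (∑ χ ∈ F, ((‖d χ‖ : ℂ)) ^ 2)
          = ∑ χ ∈ F, ∑ ψ ∈ F, ((starRingEnd ℂ) (d χ) * d ψ)
              * (if χ = ψ then (1 : ℂ) else 0) := by
        refine Finset.sum_congr rfl fun χ hχ => ?_
        have hsp : ∀ ψ ∈ F, ((starRingEnd ℂ) (d χ) * d ψ) * (if χ = ψ then (1 : ℂ) else 0)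
            = if χ = ψ then (starRingEnd ℂ) (d χ) * d ψ else 0 := by
          intro ψ _
          split <;> simp
        rw [Finset.sum_congr rfl hsp,
          Finset.sum_ite_eq F χ (fun ψ => (starRingEnd ℂ) (d χ) * d ψ), if_pos hχ,
          RCLike.conj_mul]
        norm_cast
      rw [hval]
      refine tendsto_finset_sum _ fun χ _ => tendsto_finset_sum _ fun ψ _ => ?_
      exact (inner_XC_tendsto hA χ ψ).const_mul _
    have : Tendsto (fun n => RCLike.re (inner ℂ (YC hA F d n) (YC hA F d n) : ℂ)) atTop
        (𝓝 (RCLike.re (∑ χ ∈ F, ((‖d χ‖ : ℂ)) ^ 2))) :=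
      (RCLike.continuous_re.tendsto _).comp hlim
    have hre : RCLike.re (∑ χ ∈ F, ((‖d χ‖ : ℂ)) ^ 2) = ∑ χ ∈ F, ‖d χ‖ ^ 2 := by
      rw [map_sum]
      refine Finset.sum_congr rfl fun χ _ => ?_
      norm_cast
    rw [hre] at this
    have hns : ∀ n, ‖YC hA F d n‖ ^ 2
        = RCLike.re (inner ℂ (YC hA F d n) (YC hA F d n) : ℂ) :=
      fun n => (inner_self_eq_norm_sq _).symm
    simp only [hns]
    exact this
  simp only [hF]
  have t2re : Tendsto (fun n => RCLike.re (inner ℂ (FC hA hfL n) (YC hA F d n) : ℂ)) atTop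
      (𝓝 ((∑ χ ∈ F, d χ * (starRingEnd ℂ) (a χ)).re)) := by
    have := (RCLike.continuous_re.tendsto _).comp t2
    simpa [RCLike.re_to_complex, Function.comp_def] using this
  exact (t1.sub (t2re.const_mul 2)).add t3

end Key
section Bridge

lemma parseval_alg (F : Finset (Char G)) (a d : Char G → ℂ) (M : ℝ) :
    M - 2 * (∑ χ ∈ F, d χ * (starRingEnd ℂ) (a χ)).re + ∑ χ ∈ F, ‖d χ‖ ^ 2
      = M - ∑ χ ∈ F, ‖a χ‖ ^ 2 + ∑ χ ∈ F, ‖d χ - a χ‖ ^ 2 := by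
  have hpt : ∀ χ : Char G, ‖d χ - a χ‖ ^ 2
      = ‖d χ‖ ^ 2 - 2 * (d χ * (starRingEnd ℂ) (a χ)).re + ‖a χ‖ ^ 2 := by
    intro χ
    have h := norm_sub_sq (𝕜 := ℂ) (d χ) (a χ)
    rw [RCLike.inner_apply'] at h
    rw [h]
    congr 2
    simp only [RCLike.re_to_complex, Complex.mul_re, Complex.conj_re, Complex.conj_im]
    ring
  rw [Finset.sum_congr rfl fun χ _ => hpt χ]
  rw [Complex.re_sum, Finset.sum_add_distrib, Finset.sum_sub_distrib, Finset.mul_sum]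
  ring

lemma cauchy_of_approx {E : Type*} [NormedAddCommGroup E] (u : ℕ → E)
    (h : ∀ ε : ℝ, 0 < ε → ∃ v : ℕ → E, CauchySeq v ∧ ∀ᶠ n in atTop, ‖u n - v n‖ ≤ ε) :
    CauchySeq u := by
  rw [Metric.cauchySeq_iff]
  intro ε hε
  obtain ⟨v, hv, hclose⟩ := h (ε / 4) (by linarith)
  rw [Metric.cauchySeq_iff] at hv
  obtain ⟨N1, hN1⟩ := hv (ε / 4) (by linarith)
  obtain ⟨N2, hN2⟩ := eventually_atTop.1 hclose
  refine ⟨max N1 N2, fun m hm n hn => ?_⟩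
  have h1 := hN2 m (le_trans (le_max_right _ _) hm)
  have h2 := hN2 n (le_trans (le_max_right _ _) hn)
  have h3 := hN1 m (le_trans (le_max_left _ _) hm) n (le_trans (le_max_left _ _) hn)
  have h4 : dist (u m) (u n) ≤ dist (u m) (v m) + dist (v m) (v n) + dist (v n) (u n) :=
    dist_triangle4 _ _ _ _
  simp only [dist_eq_norm] at *
  have h5 : ‖v n - u n‖ = ‖u n - v n‖ := norm_sub_rev _ _
  linarith [h4, h1, h2, h3, h5.le, h5.ge]

lemma isTrigPoly_finset (F : Finset (Char G)) (d : Char G → ℂ) :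
    IsTrigPoly (fun x => ∑ χ ∈ F, d χ * (χ : C(G, ℂ)) x) := by
  classical
  refine ⟨F.card, fun i => d (F.equivFin.symm i), fun i => (F.equivFin.symm i : Char G), ?_⟩
  funext x
  rw [← Finset.sum_attach F (fun χ : Char G => d χ * (χ : C(G, ℂ)) x),
    ← Finset.univ_eq_attach]
  exact Fintype.sum_equiv F.equivFin _ _ (fun χ => by simp)

variable (hA : IsVanHove θ A)
include hA

open scoped Classical in
lemma inner_X_YC_tendsto (χ : Char G) (F : Finset (Char G)) (d : Char G → ℂ) :
    Tendsto (fun n => (inner ℂ (XC hA n χ) (YC hA F d n) : ℂ)) atTop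
      (𝓝 (∑ ψ ∈ F, d ψ * (if χ = ψ then 1 else 0))) := by
  have heq : ∀ n, (inner ℂ (XC hA n χ) (YC hA F d n) : ℂ)
      = ∑ ψ ∈ F, d ψ * (inner ℂ (XC hA n χ) (XC hA n ψ) : ℂ) := by
    intro n
    rw [YC, inner_sum]
    exact Finset.sum_congr rfl fun ψ _ => inner_smul_right _ _ _
  simp only [heq]
  exact tendsto_finset_sum _ fun ψ _ => (inner_XC_tendsto hA χ ψ).const_mul _

lemma normSq_YC_tendsto (F : Finset (Char G)) (d : Char G → ℂ) :
    Tendsto (fun n => ‖YC hA F d n‖ ^ 2) atTop (𝓝 (∑ χ ∈ F, ‖d χ‖ ^ 2)) := by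
  classical
  have heq : ∀ n, (inner ℂ (YC hA F d n) (YC hA F d n) : ℂ)
      = ∑ χ ∈ F, ∑ ψ ∈ F, ((starRingEnd ℂ) (d χ) * d ψ)
          * (inner ℂ (XC hA n χ) (XC hA n ψ) : ℂ) := by
    intro n
    rw [YC, sum_inner]
    refine Finset.sum_congr rfl fun χ _ => ?_
    rw [inner_sum]
    refine Finset.sum_congr rfl fun ψ _ => ?_
    rw [inner_smul_left, inner_smul_right]
    ring
  have hlim : Tendsto (fun n => (inner ℂ (YC hA F d n) (YC hA F d n) : ℂ)) atTop
      (𝓝 (∑ χ ∈ F, ((‖d χ‖ : ℂ)) ^ 2)) := by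
    simp only [heq]
    have hval : (∑ χ ∈ F, ((‖d χ‖ : ℂ)) ^ 2)
        = ∑ χ ∈ F, ∑ ψ ∈ F, ((starRingEnd ℂ) (d χ) * d ψ)
            * (if χ = ψ then (1 : ℂ) else 0) := by
      refine Finset.sum_congr rfl fun χ hχ => ?_
      have hsp : ∀ ψ ∈ F, ((starRingEnd ℂ) (d χ) * d ψ) * (if χ = ψ then (1 : ℂ) else 0)
          = if χ = ψ then (starRingEnd ℂ) (d χ) * d ψ else 0 := by
        intro ψ _
        split <;> simp
      rw [Finset.sum_congr rfl hsp,
        Finset.sum_ite_eq F χ (fun ψ => (starRingEnd ℂ) (d χ) * d ψ), if_pos hχ,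
        RCLike.conj_mul]
      norm_cast
    rw [hval]
    refine tendsto_finset_sum _ fun χ _ => tendsto_finset_sum _ fun ψ _ => ?_
    exact (inner_XC_tendsto hA χ ψ).const_mul _
  have hcont : Tendsto (fun n => RCLike.re (inner ℂ (YC hA F d n) (YC hA F d n) : ℂ)) atTop
      (𝓝 (RCLike.re (∑ χ ∈ F, ((‖d χ‖ : ℂ)) ^ 2))) :=
    (RCLike.continuous_re.tendsto _).comp hlim
  have hre : RCLike.re (∑ χ ∈ F, ((‖d χ‖ : ℂ)) ^ 2) = ∑ χ ∈ F, ‖d χ‖ ^ 2 := by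
    rw [map_sum]
    refine Finset.sum_congr rfl fun χ _ => ?_
    norm_cast
  rw [hre] at hcont
  have hns : ∀ n, ‖YC hA F d n‖ ^ 2
      = RCLike.re (inner ℂ (YC hA F d n) (YC hA F d n) : ℂ) :=
    fun n => (inner_self_eq_norm_sq _).symm
  simp only [hns]
  exact hcont

lemma memLp_P (n : ℕ) (F : Finset (Char G)) (d : Char G → ℂ) :
    MemLp (fun x => ∑ χ ∈ F, d χ * (χ : C(G, ℂ)) x) 2 (mu θ A n) := by
  refine memLp_mu_of_bdd hA n ?_ (∑ χ ∈ F, ‖d χ‖) ?_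
  · exact continuous_finset_sum F fun χ _ => continuous_const.mul (char_continuous χ)
  · intro x
    refine le_trans (norm_sum_le _ _) ?_
    refine Finset.sum_le_sum fun χ _ => ?_
    rw [norm_mul, char_norm, mul_one]

variable {f : G → ℂ} (hfL : MemLpLoc θ 2 f)

lemma toLp_fsubP (n : ℕ) (F : Finset (Char G)) (d : Char G → ℂ) :
    ((memLp_mu hA n hfL).sub (memLp_P hA n F d)).toLp _
      = FC hA hfL n - YC hA F d n := by
  refine Lp.ext ?_
  have hae : (((FC hA hfL n - YC hA F d n) : Lp ℂ 2 (mu θ A n)) : G → ℂ)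
      =ᵐ[mu θ A n] (f - fun x => ∑ χ ∈ F, d χ * (χ : C(G, ℂ)) x) := by
    filter_upwards [Lp.coeFn_sub (FC hA hfL n) (YC hA F d n),
      (memLp_mu hA n hfL).coeFn_toLp,
      coeFn_sum_smul F d (fun χ => fun t => (χ : C(G, ℂ)) t)
        (fun χ => memLp_char hA n χ)] with x e1 e2 e3
    rw [e1, Pi.sub_apply, Pi.sub_apply]
    have e2' : (FC hA hfL n : G → ℂ) x = f x := e2
    have e3' : (YC hA F d n : G → ℂ) x = ∑ χ ∈ F, d χ * (χ : C(G, ℂ)) x := e3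
    rw [e2', e3']
  exact (MemLp.coeFn_toLp _).trans hae.symm

end Bridge
section Forward

lemma trig_canon {P : G → ℂ} (hP : IsTrigPoly P) :
    ∃ (F : Finset (Char G)) (d : Char G → ℂ),
      P = fun x => ∑ χ ∈ F, d χ * (χ : C(G, ℂ)) x := by
  classical
  obtain ⟨m, c, χf, rfl⟩ := hP
  refine ⟨Finset.image χf Finset.univ,
    fun ψ => ∑ i ∈ Finset.univ.filter (fun i => χf i = ψ), c i, ?_⟩
  funext x
  rw [← Finset.sum_fiberwise_of_maps_to
    (fun i _ => Finset.mem_image_of_mem χf (Finset.mem_univ i))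
    (fun i => c i * ((χf i : C(G, ℂ))) x)]
  refine Finset.sum_congr rfl fun ψ hψ => ?_
  rw [Finset.sum_mul]
  refine Finset.sum_congr rfl fun i hi => ?_
  rw [Finset.mem_filter] at hi
  rw [hi.2]

variable (hA : IsVanHove θ A) {f : G → ℂ} (hfL : MemLpLoc θ 2 f)
include hA hfL

lemma forward
    (hB : ∀ ε : ℝ, 0 < ε → ∃ P : G → ℂ, IsTrigPoly P ∧
      besSN θ A 2 (fun x => f x - P x) < ENNReal.ofReal ε) :
    ∃ (a : Char G → ℂ) (M : ℝ),
      (∀ χ : Char G, FBTendsto θ A f χ (a χ)) ∧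
      Tendsto (fun n => (∫ t in A n, ‖f t‖ ^ 2 ∂θ) / (θ (A n)).toReal) atTop (𝓝 M) ∧
      (∑' χ : Char G, ENNReal.ofReal (‖a χ‖ ^ 2)) = ENNReal.ofReal M := by
  classical
  have happrox : ∀ ε : ℝ, 0 < ε → ∃ (F : Finset (Char G)) (d : Char G → ℂ),
      ∀ᶠ n in atTop, ‖FC hA hfL n - YC hA F d n‖ < ε := by
    intro ε hε
    obtain ⟨P, hPt, hPb⟩ := hB ε hε
    obtain ⟨F, d, rfl⟩ := trig_canon hPt
    refine ⟨F, d, ?_⟩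
    have hg : ∀ n, MemLp (fun x => f x - ∑ χ ∈ F, d χ * (χ : C(G, ℂ)) x) 2 (mu θ A n) :=
      fun n => (memLp_mu hA n hfL).sub (memLp_P hA n F d)
    have hev := eventually_lt_of_besSN_lt hA hg hε hPb
    filter_upwards [hev] with n hn
    rwa [show (hg n).toLp _ = FC hA hfL n - YC hA F d n from toLp_fsubP hA hfL n F d] at hn
  -- existence of Fourier--Bohr coefficients
  have hacauchy : ∀ χ : Char G, ∃ c : ℂ,
      Tendsto (fun n => (inner ℂ (XC hA n χ) (FC hA hfL n) : ℂ)) atTop (𝓝 c) := by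
    intro χ
    have hC : CauchySeq fun n => (inner ℂ (XC hA n χ) (FC hA hfL n) : ℂ) := by
      apply cauchy_of_approx
      intro ε hε
      obtain ⟨F, d, hFd⟩ := happrox ε hε
      refine ⟨fun n => (inner ℂ (XC hA n χ) (YC hA F d n) : ℂ),
        (inner_X_YC_tendsto hA χ F d).cauchySeq, ?_⟩
      filter_upwards [hFd] with n hn
      have hsub : (inner ℂ (XC hA n χ) (FC hA hfL n) : ℂ) - inner ℂ (XC hA n χ) (YC hA F d n)
          = inner ℂ (XC hA n χ) (FC hA hfL n - YC hA F d n) := (inner_sub_right _ _ _).symm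
      rw [hsub]
      calc ‖(inner ℂ (XC hA n χ) (FC hA hfL n - YC hA F d n) : ℂ)‖
          ≤ ‖XC hA n χ‖ * ‖FC hA hfL n - YC hA F d n‖ := norm_inner_le_norm _ _
        _ = ‖FC hA hfL n - YC hA F d n‖ := by rw [norm_XC, one_mul]
        _ ≤ ε := hn.le
    exact cauchySeq_tendsto_of_complete hC
  choose a ha using hacauchy
  have haFB : ∀ χ : Char G, FBTendsto θ A f χ (a χ) := by
    intro χ
    have h := ha χ
    have heq : (fun n => (inner ℂ (XC hA n χ) (FC hA hfL n) : ℂ))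
        = fun n => cAvg θ (A n) fun t => (starRingEnd ℂ) ((χ : C(G, ℂ)) t) * f t :=
      funext fun n => inner_XF_eq hA hfL n χ
    rw [heq] at h
    exact h
  -- existence of the mean of |f|^2
  have hMc : CauchySeq fun n => ‖FC hA hfL n‖ := by
    apply cauchy_of_approx
    intro ε hε
    obtain ⟨F, d, hFd⟩ := happrox ε hε
    have hYnorm : Tendsto (fun n => ‖YC hA F d n‖) atTop
        (𝓝 (Real.sqrt (∑ χ ∈ F, ‖d χ‖ ^ 2))) := by
      have h1 := (Real.continuous_sqrt.tendsto _).comp (normSq_YC_tendsto hA F d)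
      simp only [Function.comp_def] at h1
      have h2 : ∀ n, Real.sqrt (‖YC hA F d n‖ ^ 2) = ‖YC hA F d n‖ :=
        fun n => Real.sqrt_sq (norm_nonneg _)
      simp only [h2] at h1
      exact h1
    refine ⟨_, hYnorm.cauchySeq, ?_⟩
    filter_upwards [hFd] with n hn
    rw [Real.norm_eq_abs]
    exact le_trans (abs_norm_sub_norm_le _ _) hn.le
  obtain ⟨l, hl⟩ := cauchySeq_tendsto_of_complete hMc
  have hM : Tendsto (fun n => (∫ t in A n, ‖f t‖ ^ 2 ∂θ) / (θ (A n)).toReal) atTop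
      (𝓝 (l ^ 2)) := by
    have h1 := hl.mul hl
    have heq : (fun n => ‖FC hA hfL n‖ * ‖FC hA hfL n‖)
        = fun n => (∫ t in A n, ‖f t‖ ^ 2 ∂θ) / (θ (A n)).toReal :=
      funext fun n => by rw [← pow_two, normSq_FC_eq hA hfL n]
    rw [heq] at h1
    rw [pow_two]
    exact h1
  set M := l ^ 2 with hMdef
  have hBessel : ∀ F : Finset (Char G), ∑ χ ∈ F, ‖a χ‖ ^ 2 ≤ M := by
    intro F
    have hk := key_tendsto hA hfL haFB hM F a
    rw [parseval_alg F a a M] at hk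
    simp only [sub_self, norm_zero, zero_pow (by norm_num : (2 : ℕ) ≠ 0), Finset.sum_const_zero, add_zero] at hk
    have h0 : 0 ≤ M - ∑ χ ∈ F, ‖a χ‖ ^ 2 := by
      refine ge_of_tendsto' hk fun n => ?_
      positivity
    linarith
  have hupper : ∀ δ : ℝ, 0 < δ → ∃ F : Finset (Char G),
      M - ∑ χ ∈ F, ‖a χ‖ ^ 2 ≤ δ := by
    intro δ hδ
    obtain ⟨F, d, hFd⟩ := happrox (Real.sqrt δ) (Real.sqrt_pos.2 hδ)
    have hk := key_tendsto hA hfL haFB hM F d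
    rw [parseval_alg F a d M] at hk
    have hle : M - ∑ χ ∈ F, ‖a χ‖ ^ 2 + ∑ χ ∈ F, ‖d χ - a χ‖ ^ 2 ≤ δ := by
      refine le_of_tendsto hk ?_
      filter_upwards [hFd] with n hn
      have h1 : ‖FC hA hfL n - YC hA F d n‖ ^ 2 < Real.sqrt δ ^ 2 :=
        pow_lt_pow_left₀ hn (norm_nonneg _) two_ne_zero
      rw [Real.sq_sqrt hδ.le] at h1
      exact h1.le
    have h2 : (0 : ℝ) ≤ ∑ χ ∈ F, ‖d χ - a χ‖ ^ 2 := by positivity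
    refine ⟨F, by linarith⟩
  refine ⟨a, M, haFB, hM, ?_⟩
  have hM0 : 0 ≤ M := by
    have := hBessel ∅
    simpa using this
  apply le_antisymm
  · rw [ENNReal.tsum_eq_iSup_sum]
    refine iSup_le fun F => ?_
    rw [← ENNReal.ofReal_sum_of_nonneg fun χ _ => by positivity]
    exact ENNReal.ofReal_le_ofReal (hBessel F)
  · refine ENNReal.le_of_forall_pos_le_add fun ε hε _ => ?_
    obtain ⟨F, hF⟩ := hupper ε (by exact_mod_cast hε)
    calc ENNReal.ofReal M
        ≤ ENNReal.ofReal ((∑ χ ∈ F, ‖a χ‖ ^ 2) + (ε : ℝ)) :=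
          ENNReal.ofReal_le_ofReal (by linarith)
      _ = ENNReal.ofReal (∑ χ ∈ F, ‖a χ‖ ^ 2) + ENNReal.ofReal (ε : ℝ) :=
          ENNReal.ofReal_add (by positivity) (by positivity)
      _ ≤ (∑' χ : Char G, ENNReal.ofReal (‖a χ‖ ^ 2)) + (ε : ℝ≥0∞) := by
          refine add_le_add ?_ ?_
          · rw [ENNReal.ofReal_sum_of_nonneg fun χ _ => by positivity]
            exact ENNReal.sum_le_tsum F
          · rw [ENNReal.ofReal_coe_nnreal]

end Forward
section Backward

variable (hA : IsVanHove θ A) {f : G → ℂ} (hfL : MemLpLoc θ 2 f)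
include hA hfL

lemma backward (a : Char G → ℂ) (M : ℝ)
    (ha : ∀ χ : Char G, FBTendsto θ A f χ (a χ))
    (hM : Tendsto (fun n => (∫ t in A n, ‖f t‖ ^ 2 ∂θ) / (θ (A n)).toReal) atTop (𝓝 M))
    (hsum : (∑' χ : Char G, ENNReal.ofReal (‖a χ‖ ^ 2)) = ENNReal.ofReal M) :
    ∀ ε : ℝ, 0 < ε → ∃ P : G → ℂ, IsTrigPoly P ∧
      besSN θ A 2 (fun x => f x - P x) < ENNReal.ofReal ε := by
  intro ε hε
  have hM0 : 0 ≤ M := ge_of_tendsto' hM fun n => by positivity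
  have hBessel : ∀ F : Finset (Char G), ∑ χ ∈ F, ‖a χ‖ ^ 2 ≤ M := by
    intro F
    have h1 : ENNReal.ofReal (∑ χ ∈ F, ‖a χ‖ ^ 2) ≤ ENNReal.ofReal M := by
      rw [ENNReal.ofReal_sum_of_nonneg fun χ _ => by positivity, ← hsum]
      exact ENNReal.sum_le_tsum F
    exact (ENNReal.ofReal_le_ofReal_iff hM0).1 h1
  have hexF : ∃ F : Finset (Char G), M - ∑ χ ∈ F, ‖a χ‖ ^ 2 < ε ^ 2 := by
    rcases lt_or_ge M (ε ^ 2) with h | h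
    · exact ⟨∅, by simpa using h⟩
    · have hM0' : 0 < M := lt_of_lt_of_le (by positivity) h
      have hlt : ENNReal.ofReal (M - ε ^ 2 / 2)
          < ∑' χ : Char G, ENNReal.ofReal (‖a χ‖ ^ 2) := by
        rw [hsum]
        refine (ENNReal.ofReal_lt_ofReal_iff hM0').2 ?_
        nlinarith
      rw [ENNReal.tsum_eq_iSup_sum] at hlt
      obtain ⟨F, hF⟩ := lt_iSup_iff.1 hlt
      rw [← ENNReal.ofReal_sum_of_nonneg fun χ _ => by positivity] at hF
      have hF' : M - ε ^ 2 / 2 < ∑ χ ∈ F, ‖a χ‖ ^ 2 := by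
        by_contra hcon
        push_neg at hcon
        exact absurd (ENNReal.ofReal_le_ofReal hcon) (not_le.2 hF)
      refine ⟨F, by nlinarith⟩
  obtain ⟨F, hF⟩ := hexF
  refine ⟨fun x => ∑ χ ∈ F, a χ * (χ : C(G, ℂ)) x, isTrigPoly_finset F a, ?_⟩
  have hg : ∀ n, MemLp (fun x => f x - ∑ χ ∈ F, a χ * (χ : C(G, ℂ)) x) 2 (mu θ A n) :=
    fun n => (memLp_mu hA n hfL).sub (memLp_P hA n F a)
  have hk := key_tendsto hA hfL ha hM F a
  rw [parseval_alg F a a M] at hk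
  simp only [sub_self, norm_zero, zero_pow (by norm_num : (2 : ℕ) ≠ 0),
    Finset.sum_const_zero, add_zero] at hk
  have hkk : Tendsto (fun n => ‖(hg n).toLp _‖ ^ 2) atTop
      (𝓝 (M - ∑ χ ∈ F, ‖a χ‖ ^ 2)) := by
    have heq : ∀ n, ‖(hg n).toLp _‖ = ‖FC hA hfL n - YC hA F a n‖ := fun n => by
      rw [show (hg n).toLp _ = FC hA hfL n - YC hA F a n from toLp_fsubP hA hfL n F a]
    simp only [heq]
    exact hk
  exact besSN_lt_of_tendsto hA hg hkk hF hε

end Backward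
end P11

theorem statement11
    {G : Type*} [AddCommGroup G] [TopologicalSpace G] [IsTopologicalAddGroup G]
    [LocallyCompactSpace G] [SigmaCompactSpace G] [T2Space G]
    [MeasurableSpace G] [BorelSpace G]
    (θ : Measure G) [θ.IsAddHaarMeasure]
    (A : ℕ → Set G) (hA : IsVanHove θ A)
    (f : G → ℂ) (hf : MemLpLoc θ 2 f) :
    BapMem θ A 2 f ↔
      ∃ (a : Char G → ℂ) (M : ℝ),
        (∀ χ : Char G, FBTendsto θ A f χ (a χ)) ∧
        Tendsto (fun n => (∫ t in A n, ‖f t‖ ^ 2 ∂θ) / (θ (A n)).toReal) atTop (𝓝 M) ∧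
        (∑' χ : Char G, ENNReal.ofReal (‖a χ‖ ^ 2)) = ENNReal.ofReal M := by
  constructor
  · rintro ⟨-, happ⟩
    exact P11.forward hA hf happ
  · rintro ⟨a, M, ha, hM, hsum⟩
    exact ⟨hf, P11.backward hA hf a M ha hM hsum⟩
end
end
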